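/- If all consumers in the n-consumer game other than consumer i use a DOE strategy ν of the continuum game, then the maximum expected payoff consumer i can obtain is asymptotically no larger than her optimal oblivious value: for any sequence of history-dependent strategies {κⁿ}, limsup_{n→∞} ( Vⁿ_{i,0}(x₀, s₀ | κⁿ, ν) − Ṽ_{i,0}(x₀, s₀ | ν, ν) ) ≤ 0 for every s₀ ∈ 𝒮 and x₀ ∈ 𝒳₀. -/

import Mathlib

/-!
Dynamic pricing model of Tsitsiklis and Xu, "Pricing of Fluctuations in
Electricity Markets".

* `S` : finite exogenous state space, evolving as a Markov chain with kernel `K`;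
* `X0` : finite set of consumer types, with type distribution `eta s0` given the
  initial exogenous state `s0`;
* actions lie in `[0, B]`, internal states in `[0, Zbd]`, updated by `r`;
* `U t x z s a` : stage utility; `Cc`, `Hc0`, `Hc` : continuum primary and
  ancillary cost functions, with (partial) derivatives `dC`, `dH0`, `dH1`
  (w.r.t. the first demand argument) and `dH2` (w.r.t. the second).
In the `n`-consumer model the costs scale as `Cⁿ(A,s) = n * Cc (A/n) s` etc., so
the `n`-consumer prices are the continuum marginal costs evaluated at the
per-capita demand `A / n`.
-/

noncomputable section

structure ElecModel (S : Type*) (X0 : Type*) [Fintype S] [DecidableEq S] [Fintype X0] where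
  T : ℕ
  B : ℝ
  B_pos : 0 < B
  Zbd : ℝ
  K : S → S → ℝ
  K_nonneg : ∀ s s', 0 ≤ K s s'
  K_sum : ∀ s, ∑ s' : S, K s s' = 1
  eta : S → X0 → ℝ
  eta_nonneg : ∀ s x, 0 ≤ eta s x
  eta_sum : ∀ s, ∑ x : X0, eta s x = 1
  r : X0 → ℝ → ℝ → S → ℝ
  U : ℕ → X0 → ℝ → S → ℝ → ℝ
  Cc : ℝ → S → ℝ
  Hc0 : ℝ → S → ℝ
  Hc : ℝ → ℝ → S → S → ℝ
  dC : ℝ → S → ℝ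
  dH0 : ℝ → S → ℝ
  dH1 : ℝ → ℝ → S → S → ℝ
  dH2 : ℝ → ℝ → S → S → ℝ

namespace ElecModel

variable {S : Type*} {X0 : Type*} [Fintype S] [DecidableEq S] [Fintype X0] [DecidableEq X0]

/-- A dynamic oblivious strategy: the action depends only on the consumer's type and
the history of exogenous states up to the current stage. -/
structure OblStrategy (M : ElecModel S X0) where
  act : ℕ → X0 → (ℕ → S) → ℝ
  act_mem : ∀ t x h, act t x h ∈ Set.Icc (0 : ℝ) M.B
  act_prefix : ∀ t x h h', (∀ τ ≤ t, h τ = h' τ) → act t x h = act t x h'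

/-- A history-dependent strategy: the action depends on the consumer's augmented state
`(previous action, type, internal state)`, the history of exogenous states up to the
current stage, and the empirical distribution (as a multiset) of the other consumers'
augmented states. -/
structure HistStrategy (M : ElecModel S X0) where
  act : ℕ → ℝ × X0 × ℝ → (ℕ → S) → Multiset (ℝ × X0 × ℝ) → ℝ
  act_mem : ∀ t y h f, act t y h f ∈ Set.Icc (0 : ℝ) M.B
  act_prefix : ∀ t y h h' f, (∀ τ ≤ t, h τ = h' τ) → act t y h f = act t y h' f

/-- Probability of the Markov chain of exogenous states following `h` on stages `0,…,T`,
starting from `s0`. -/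
def histProb (M : ElecModel S X0) (s0 : S) (h : ℕ → S) : ℝ :=
  (if h 0 = s0 then (1 : ℝ) else 0) * ∏ t ∈ Finset.range M.T, M.K (h t) (h (t + 1))

def extendHist (M : ElecModel S X0) (g : Fin (M.T + 1) → S) : ℕ → S :=
  fun n => g ⟨min n M.T, Nat.lt_succ_of_le (min_le_right n M.T)⟩

/-- Expectation, over the Markov histories of exogenous states starting at `s0`,
of a function of the history. -/
def expectHist (M : ElecModel S X0) (s0 : S) (F : (ℕ → S) → ℝ) : ℝ :=
  ∑ g : Fin (M.T + 1) → S, M.histProb s0 (M.extendHist g) * F (M.extendHist g)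

/-- The internal state trajectory of a consumer of type `x` along history `h`
under the action sequence `a` : `z 0 = 0`, `z (t+1) = r x (z t) (a t) (h (t+1))`. -/
def zTraj (M : ElecModel S X0) (x : X0) (h : ℕ → S) (a : ℕ → ℝ) : ℕ → ℝ
  | 0 => 0
  | t + 1 => M.zTraj x h a t |> fun z => M.r x z (a t) (h (t + 1))

/-- Average (per-capita) demand in the continuum model under the oblivious strategy `ν`. -/
def avgDemand (M : ElecModel S X0) (ν : OblStrategy M) (s0 : S) (h : ℕ → S) (t : ℕ) : ℝ :=
  ∑ x : X0, M.eta s0 x * ν.act t x h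

/-- Continuum price `p̃_t`. -/
def pTil (M : ElecModel S X0) (ν : OblStrategy M) (s0 : S) (h : ℕ → S) (t : ℕ) : ℝ :=
  M.dC (M.avgDemand ν s0 h t) (h t)

/-- Continuum price `w̃_t`. -/
def wTil (M : ElecModel S X0) (ν : OblStrategy M) (s0 : S) (h : ℕ → S) : ℕ → ℝ
  | 0 => M.dH0 (M.avgDemand ν s0 h 0) (h 0)
  | t + 1 => M.dH2 (M.avgDemand ν s0 h t) (M.avgDemand ν s0 h (t + 1)) (h t) (h (t + 1))

/-- Continuum price `q̃_t` (charged on the previous stage's demand). -/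
def qTil (M : ElecModel S X0) (ν : OblStrategy M) (s0 : S) (h : ℕ → S) : ℕ → ℝ
  | 0 => 0
  | t + 1 => M.dH1 (M.avgDemand ν s0 h t) (M.avgDemand ν s0 h (t + 1)) (h t) (h (t + 1))

/-- Total oblivious stage value along a history: consumer of type `x` follows `νhat`,
prices are induced by `ν`. -/
def oblStageSum (M : ElecModel S X0) (νhat ν : OblStrategy M) (s0 : S) (x : X0)
    (h : ℕ → S) : ℝ :=
  ∑ t ∈ Finset.range (M.T + 1),
    (M.U t x (M.zTraj x h (fun τ => νhat.act τ x h) t) (h t) (νhat.act t x h)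
      - (M.pTil ν s0 h t + M.wTil ν s0 h t) * νhat.act t x h
      - M.qTil ν s0 h t * (if t = 0 then 0 else νhat.act (t - 1) x h))

/-- Oblivious value function `Ṽ_{i,0}(x₀, s₀ ∣ ν̂, ν)`. -/
def oblValue (M : ElecModel S X0) (νhat ν : OblStrategy M) (x0 : X0) (s0 : S) : ℝ :=
  M.expectHist s0 (fun h => M.oblStageSum νhat ν s0 x0 h)

/-- A Dynamic Oblivious Equilibrium. -/
def IsDOE (M : ElecModel S X0) (ν : OblStrategy M) : Prop :=
  ∀ (νhat : OblStrategy M) (x0 : X0) (s0 : S),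
    M.oblValue νhat ν x0 s0 ≤ M.oblValue ν ν x0 s0

/-- The previous action of a consumer following the oblivious strategy `ν` (zero at stage 0). -/
def prevActObl (M : ElecModel S X0) (ν : OblStrategy M) (x : X0) (h : ℕ → S) : ℕ → ℝ
  | 0 => 0
  | t + 1 => ν.act t x h

/-- The empirical distribution (multiset) of the augmented states of the `m` consumers
other than `i`, all following the oblivious strategy `ν`, with type profile `ω`. -/
def othersAug (M : ElecModel S X0) (m : ℕ) (ν : OblStrategy M) (ω : Fin m → X0)
    (h : ℕ → S) (t : ℕ) : Multiset (ℝ × X0 × ℝ) :=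
  (Finset.univ : Finset (Fin m)).val.map
    (fun j => (M.prevActObl ν (ω j) h t, ω j, M.zTraj (ω j) h (fun τ => ν.act τ (ω j) h) t))

/-- Consumer `i`'s trajectory `(action at t, internal state at t)` in the `(m+1)`-consumer
game when she plays the history-dependent strategy `κ` while the `m` other consumers
(with type profile `ω`) play the oblivious strategy `ν`. -/
def iTraj (M : ElecModel S X0) (m : ℕ) (κ : HistStrategy M) (ν : OblStrategy M)
    (x0 : X0) (ω : Fin m → X0) (h : ℕ → S) : ℕ → ℝ × ℝ
  | 0 => (κ.act 0 ((0 : ℝ), x0, (0 : ℝ)) h (M.othersAug m ν ω h 0), 0)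
  | t + 1 =>
      M.iTraj m κ ν x0 ω h t |> fun prev =>
        (M.r x0 prev.2 prev.1 (h (t + 1))) |> fun z' =>
          (κ.act (t + 1) (prev.1, x0, z') h (M.othersAug m ν ω h (t + 1)), z')

/-- Aggregate demand in the `(m+1)`-consumer game. -/
def aggDemandN (M : ElecModel S X0) (m : ℕ) (κ : HistStrategy M) (ν : OblStrategy M)
    (x0 : X0) (ω : Fin m → X0) (h : ℕ → S) (t : ℕ) : ℝ :=
  (M.iTraj m κ ν x0 ω h t).1 + ∑ j : Fin m, ν.act t (ω j) h

/-- `n`-consumer price `p_t = (Cⁿ)'(A_t, s_t) = C̃'(A_t/n, s_t)`, with `n = m+1`. -/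
def pN (M : ElecModel S X0) (m : ℕ) (κ : HistStrategy M) (ν : OblStrategy M)
    (x0 : X0) (ω : Fin m → X0) (h : ℕ → S) (t : ℕ) : ℝ :=
  M.dC (M.aggDemandN m κ ν x0 ω h t / ((m : ℝ) + 1)) (h t)

/-- `n`-consumer price `w_t`, with `n = m+1`. -/
def wN (M : ElecModel S X0) (m : ℕ) (κ : HistStrategy M) (ν : OblStrategy M)
    (x0 : X0) (ω : Fin m → X0) (h : ℕ → S) : ℕ → ℝ
  | 0 => M.dH0 (M.aggDemandN m κ ν x0 ω h 0 / ((m : ℝ) + 1)) (h 0)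
  | t + 1 =>
      M.dH2 (M.aggDemandN m κ ν x0 ω h t / ((m : ℝ) + 1))
        (M.aggDemandN m κ ν x0 ω h (t + 1) / ((m : ℝ) + 1)) (h t) (h (t + 1))

/-- `n`-consumer price `q_t` (charged on the previous stage's demand), with `n = m+1`. -/
def qN (M : ElecModel S X0) (m : ℕ) (κ : HistStrategy M) (ν : OblStrategy M)
    (x0 : X0) (ω : Fin m → X0) (h : ℕ → S) : ℕ → ℝ
  | 0 => 0
  | t + 1 =>
      M.dH1 (M.aggDemandN m κ ν x0 ω h t / ((m : ℝ) + 1))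
        (M.aggDemandN m κ ν x0 ω h (t + 1) / ((m : ℝ) + 1)) (h t) (h (t + 1))

/-- Consumer `i`'s total payoff along the history `h`. -/
def iPayoff (M : ElecModel S X0) (m : ℕ) (κ : HistStrategy M) (ν : OblStrategy M)
    (x0 : X0) (ω : Fin m → X0) (h : ℕ → S) : ℝ :=
  ∑ t ∈ Finset.range (M.T + 1),
    (M.U t x0 (M.iTraj m κ ν x0 ω h t).2 (h t) (M.iTraj m κ ν x0 ω h t).1
      - (M.pN m κ ν x0 ω h t + M.wN m κ ν x0 ω h t) * (M.iTraj m κ ν x0 ω h t).1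
      - M.qN m κ ν x0 ω h t * (if t = 0 then 0 else (M.iTraj m κ ν x0 ω h (t - 1)).1))

/-- Consumer `i`'s expected payoff `Vⁿ_{i,0}(x₀, s₀ ∣ κ, ν)` in the `(m+1)`-consumer game:
the other `m` consumers' types are drawn i.i.d. from `eta s0` and all of them use `ν`. -/
def Vn (M : ElecModel S X0) (m : ℕ) (κ : HistStrategy M) (ν : OblStrategy M)
    (x0 : X0) (s0 : S) : ℝ :=
  ∑ ω : Fin m → X0, (∏ j : Fin m, M.eta s0 (ω j)) *
    M.expectHist s0 (fun h => M.iPayoff m κ ν x0 ω h)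

/-- An oblivious strategy regarded as a history-dependent strategy. -/
def OblStrategy.toHist {M : ElecModel S X0} (ν : OblStrategy M) : HistStrategy M where
  act := fun t y h _ => ν.act t y.2.1 h
  act_mem := fun t y h _ => ν.act_mem t y.2.1 h
  act_prefix := fun t y h h' _ hp => ν.act_prefix t y.2.1 h h' hp

/-- Stage social welfare in the continuum model. -/
def contStageWelfare (M : ElecModel S X0) (ν : OblStrategy M) (s0 : S) (h : ℕ → S)
    (t : ℕ) : ℝ :=
  (∑ x : X0, M.eta s0 x *
      M.U t x (M.zTraj x h (fun τ => ν.act τ x h) t) (h t) (ν.act t x h))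
    - M.Cc (M.avgDemand ν s0 h t) (h t)
    - (if t = 0 then M.Hc0 (M.avgDemand ν s0 h 0) (h 0)
        else M.Hc (M.avgDemand ν s0 h (t - 1)) (M.avgDemand ν s0 h t) (h (t - 1)) (h t))

/-- Expected social welfare `W̃₀(s₀ ∣ ν)` in the continuum model. -/
def contWelfare (M : ElecModel S X0) (ν : OblStrategy M) (s0 : S) : ℝ :=
  M.expectHist s0 (fun h => ∑ t ∈ Finset.range (M.T + 1), M.contStageWelfare ν s0 h t)

/-- Joint trajectory `(action at t, internal state at t)` of the `n` consumers with type
profile `ω` when all of them use the history-dependent strategy `κ`. -/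
def jointTraj (M : ElecModel S X0) (n : ℕ) (κ : HistStrategy M) (ω : Fin n → X0)
    (h : ℕ → S) : ℕ → Fin n → ℝ × ℝ
  | 0 => fun i =>
      (κ.act 0 ((0 : ℝ), ω i, (0 : ℝ)) h
        (((Finset.univ : Finset (Fin n)).erase i).val.map fun j => ((0 : ℝ), ω j, (0 : ℝ))), 0)
  | t + 1 => fun i =>
      M.jointTraj n κ ω h t |> fun prev =>
        (fun j : Fin n => ((prev j).1, ω j, M.r (ω j) (prev j).2 (prev j).1 (h (t + 1))))
          |> fun aug =>
            (κ.act (t + 1) (aug i) h (((Finset.univ : Finset (Fin n)).erase i).val.map aug),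
              M.r (ω i) (prev i).2 (prev i).1 (h (t + 1)))

/-- Aggregate demand in the `n`-consumer game when everyone uses `κ`. -/
def aggDemandAll (M : ElecModel S X0) (n : ℕ) (κ : HistStrategy M) (ω : Fin n → X0)
    (h : ℕ → S) (t : ℕ) : ℝ :=
  ∑ i : Fin n, (M.jointTraj n κ ω h t i).1

/-- Realized total social welfare along the history `h` in the `n`-consumer game under the
symmetric strategy profile `(κ,…,κ)`; the `n`-consumer costs are `n * C̃(A/n)` etc. -/
def welfProfile (M : ElecModel S X0) (n : ℕ) (κ : HistStrategy M) (ω : Fin n → X0)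
    (h : ℕ → S) : ℝ :=
  ∑ t ∈ Finset.range (M.T + 1),
    ((∑ i : Fin n, M.U t (ω i) (M.jointTraj n κ ω h t i).2 (h t) (M.jointTraj n κ ω h t i).1)
      - (n : ℝ) * M.Cc (M.aggDemandAll n κ ω h t / n) (h t)
      - (if t = 0 then (n : ℝ) * M.Hc0 (M.aggDemandAll n κ ω h 0 / n) (h 0)
          else (n : ℝ) * M.Hc (M.aggDemandAll n κ ω h (t - 1) / n)
                 (M.aggDemandAll n κ ω h t / n) (h (t - 1)) (h t)))

/-- Expected social welfare `𝒲ⁿ₀` in the `n`-consumer game under the symmetric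
profile `(κ,…,κ)`, the expectation taken over the i.i.d. consumer types
(equivalently, over the initial population state) and the Markov exogenous states. -/
def expWelfN (M : ElecModel S X0) (n : ℕ) (κ : HistStrategy M) (s0 : S) : ℝ :=
  ∑ ω : Fin n → X0, (∏ i : Fin n, M.eta s0 (ω i)) *
    M.expectHist s0 (fun h => M.welfProfile n κ ω h)

/-- Cumulative utility `Ū_{h_T}(x₀, a₀, …, a_T)` of a type-`x₀` consumer along history `h`
as a function of her action sequence, the internal states being generated by `r`. -/
def cumUtility (M : ElecModel S X0) (x0 : X0) (h : ℕ → S) (a : ℕ → ℝ) : ℝ :=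
  ∑ t ∈ Finset.range (M.T + 1), M.U t x0 (M.zTraj x0 h a t) (h t) (a t)

/-- The initial population state (empirical type distribution) of the type profile `ω`. -/
def popState (n : ℕ) (ω : Fin n → X0) (x : X0) : ℝ :=
  ((Finset.univ.filter fun i => ω i = x).card : ℝ) / n

/-- Assumptions 1–3 of the paper: differentiability of the cost functions, monotone
primary cost, marginal costs bounded by `P` and uniformly equicontinuous on `[0,∞)`,
utilities with values in `[0,Q]` and continuous in the action, internal states
staying in `[0, Zbd]`. -/
structure RegularAssumptions (M : ElecModel S X0) (P Q : ℝ) : Prop where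
  deriv_C : ∀ s : S, ∀ A ∈ Set.Ici (0 : ℝ),
    HasDerivWithinAt (fun u => M.Cc u s) (M.dC A s) (Set.Ici 0) A
  deriv_H0 : ∀ s : S, ∀ A ∈ Set.Ici (0 : ℝ),
    HasDerivWithinAt (fun u => M.Hc0 u s) (M.dH0 A s) (Set.Ici 0) A
  deriv_H1 : ∀ (s s' : S) (A' : ℝ), ∀ A ∈ Set.Ici (0 : ℝ),
    HasDerivWithinAt (fun u => M.Hc u A' s s') (M.dH1 A A' s s') (Set.Ici 0) A
  deriv_H2 : ∀ (s s' : S) (A : ℝ), ∀ A' ∈ Set.Ici (0 : ℝ),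
    HasDerivWithinAt (fun u => M.Hc A u s s') (M.dH2 A A' s s') (Set.Ici 0) A'
  C_mono : ∀ s : S, MonotoneOn (fun u => M.Cc u s) (Set.Ici 0)
  bound_C : ∀ s : S, ∀ A ∈ Set.Ici (0 : ℝ), |M.dC A s| ≤ P
  bound_H0 : ∀ s : S, ∀ A ∈ Set.Ici (0 : ℝ), |M.dH0 A s| ≤ P
  bound_H1 : ∀ (s s' : S), ∀ A' ∈ Set.Icc (0 : ℝ) M.B, ∀ A ∈ Set.Ici (0 : ℝ),
    |M.dH1 A A' s s'| ≤ P
  bound_H2 : ∀ (s s' : S), ∀ A' ∈ Set.Icc (0 : ℝ) M.B, ∀ A ∈ Set.Ici (0 : ℝ),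
    |M.dH2 A' A s s'| ≤ P
  equicont_C : ∀ ε > (0 : ℝ), ∃ δ > (0 : ℝ), ∀ s : S, ∀ A ∈ Set.Ici (0 : ℝ),
    ∀ A2 ∈ Set.Ici (0 : ℝ), |A - A2| ≤ δ → |M.dC A s - M.dC A2 s| ≤ ε
  equicont_H0 : ∀ ε > (0 : ℝ), ∃ δ > (0 : ℝ), ∀ s : S, ∀ A ∈ Set.Ici (0 : ℝ),
    ∀ A2 ∈ Set.Ici (0 : ℝ), |A - A2| ≤ δ → |M.dH0 A s - M.dH0 A2 s| ≤ ε
  equicont_H1 : ∀ ε > (0 : ℝ), ∃ δ > (0 : ℝ), ∀ (s s' : S), ∀ A' ∈ Set.Icc (0 : ℝ) M.B,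
    ∀ A ∈ Set.Ici (0 : ℝ), ∀ A2 ∈ Set.Ici (0 : ℝ),
      |A - A2| ≤ δ → |M.dH1 A A' s s' - M.dH1 A2 A' s s'| ≤ ε
  equicont_H2 : ∀ ε > (0 : ℝ), ∃ δ > (0 : ℝ), ∀ (s s' : S), ∀ A' ∈ Set.Icc (0 : ℝ) M.B,
    ∀ A ∈ Set.Ici (0 : ℝ), ∀ A2 ∈ Set.Ici (0 : ℝ),
      |A - A2| ≤ δ → |M.dH2 A' A s s' - M.dH2 A' A2 s s'| ≤ ε
  U_bounds : ∀ (t : ℕ) (x : X0) (z : ℝ) (s : S) (a : ℝ), M.U t x z s a ∈ Set.Icc (0 : ℝ) Q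
  U_cont : ∀ (t : ℕ) (x : X0) (z : ℝ) (s : S), Continuous fun a => M.U t x z s a
  Zbd_nonneg : 0 ≤ M.Zbd
  r_mem : ∀ (x : X0) (z a : ℝ) (s' : S), z ∈ Set.Icc (0 : ℝ) M.Zbd →
    a ∈ Set.Icc (0 : ℝ) M.B → M.r x z a s' ∈ Set.Icc (0 : ℝ) M.Zbd

/-- Assumption 4 of the paper (convexity): convex costs, concave cumulative utility,
monotone internal-state maps with one-sided derivatives, and utilities with one-sided
derivatives in the internal state. -/
structure ConvexAssumptions (M : ElecModel S X0) : Prop where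
  C_convex : ∀ s : S, ConvexOn ℝ Set.univ (fun A => M.Cc A s)
  H_convex : ∀ s s' : S, ConvexOn ℝ Set.univ (fun p : ℝ × ℝ => M.Hc p.1 p.2 s s')
  cumU_concave : ∀ (x0 : X0) (h : ℕ → S),
    ConcaveOn ℝ {a : ℕ → ℝ | ∀ t, a t ∈ Set.Icc (0 : ℝ) M.B} (fun a => M.cumUtility x0 h a)
  k_monotone : ∀ (x0 : X0) (h : ℕ → S) (t τ : ℕ), τ < t → ∀ a : ℕ → ℝ,
    Monotone (fun u => M.zTraj x0 h (Function.update a τ u) t) ∨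
      Antitone (fun u => M.zTraj x0 h (Function.update a τ u) t)
  k_onesided : ∀ (x0 : X0) (h : ℕ → S) (t τ : ℕ) (a : ℕ → ℝ) (u : ℝ),
    (∃ d, HasDerivWithinAt (fun v => M.zTraj x0 h (Function.update a τ v) t) d (Set.Ici u) u) ∧
    (∃ d, HasDerivWithinAt (fun v => M.zTraj x0 h (Function.update a τ v) t) d (Set.Iic u) u)
  U_z_onesided : ∀ (t : ℕ) (x : X0) (s : S) (a z : ℝ),
    (∃ d, HasDerivWithinAt (fun z' => M.U t x z' s a) d (Set.Ici z) z) ∧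
    (∃ d, HasDerivWithinAt (fun z' => M.U t x z' s a) d (Set.Iic z) z)

end ElecModel


set_option linter.unusedSectionVars false
set_option linter.unusedVariables false

namespace ElecModel

variable {S : Type*} {X0 : Type*} [Fintype S] [DecidableEq S] [Fintype X0] [DecidableEq X0]
variable {M : ElecModel S X0}

lemma zTraj_congr (M : ElecModel S X0) (x : X0) {h h' : ℕ → S} {a a' : ℕ → ℝ} :
    ∀ t : ℕ, (∀ τ ≤ t, h τ = h' τ) → (∀ τ < t, a τ = a' τ) →
      M.zTraj x h a t = M.zTraj x h' a' t
  | 0, _, _ => rfl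
  | t+1, hh, ha => by
      show M.r x (M.zTraj x h a t) (a t) (h (t+1)) = M.r x (M.zTraj x h' a' t) (a' t) (h' (t+1))
      rw [M.zTraj_congr x t (fun τ hτ => hh τ (hτ.trans (Nat.le_succ t)))
            (fun τ hτ => ha τ (hτ.trans (Nat.lt_succ_self t))),
          ha t (Nat.lt_succ_self t), hh (t+1) le_rfl]

lemma prevActObl_congr (M : ElecModel S X0) (ν : OblStrategy M) (x : X0) {h h' : ℕ → S}
    (t : ℕ) (hh : ∀ τ ≤ t, h τ = h' τ) :
    M.prevActObl ν x h t = M.prevActObl ν x h' t := by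
  cases t with
  | zero => rfl
  | succ t => exact ν.act_prefix t x h h' (fun τ hτ => hh τ (hτ.trans (Nat.le_succ t)))

lemma othersAug_congr (M : ElecModel S X0) (m : ℕ) (ν : OblStrategy M) (ω : Fin m → X0)
    {h h' : ℕ → S} (t : ℕ) (hh : ∀ τ ≤ t, h τ = h' τ) :
    M.othersAug m ν ω h t = M.othersAug m ν ω h' t := by
  unfold othersAug
  apply Multiset.map_congr rfl
  intro j _
  rw [M.prevActObl_congr ν (ω j) t hh,
      M.zTraj_congr (ω j) t hh (fun τ hτ => ν.act_prefix τ (ω j) h h'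
        (fun σ hσ => hh σ (hσ.trans hτ.le)))]

lemma iTraj_congr (M : ElecModel S X0) (m : ℕ) (κ : HistStrategy M) (ν : OblStrategy M)
    (x0 : X0) (ω : Fin m → X0) {h h' : ℕ → S} :
    ∀ t : ℕ, (∀ τ ≤ t, h τ = h' τ) →
      M.iTraj m κ ν x0 ω h t = M.iTraj m κ ν x0 ω h' t
  | 0, hh => by
      show (κ.act 0 ((0:ℝ), x0, (0:ℝ)) h (M.othersAug m ν ω h 0), (0:ℝ))
        = (κ.act 0 ((0:ℝ), x0, (0:ℝ)) h' (M.othersAug m ν ω h' 0), (0:ℝ))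
      rw [M.othersAug_congr m ν ω 0 hh, κ.act_prefix 0 _ h h' _ hh]
  | t+1, hh => by
      have hht : ∀ τ ≤ t, h τ = h' τ := fun τ hτ => hh τ (hτ.trans (Nat.le_succ t))
      have IH := M.iTraj_congr m κ ν x0 ω t hht
      show (κ.act (t+1) ((M.iTraj m κ ν x0 ω h t).1, x0,
              M.r x0 (M.iTraj m κ ν x0 ω h t).2 (M.iTraj m κ ν x0 ω h t).1 (h (t+1))) h
              (M.othersAug m ν ω h (t+1)),
            M.r x0 (M.iTraj m κ ν x0 ω h t).2 (M.iTraj m κ ν x0 ω h t).1 (h (t+1))) = _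
      rw [IH, hh (t+1) le_rfl, M.othersAug_congr m ν ω (t+1) hh,
          κ.act_prefix (t+1) _ h h' _ hh]
      rfl

lemma iTraj_fst_mem (M : ElecModel S X0) (m : ℕ) (κ : HistStrategy M) (ν : OblStrategy M)
    (x0 : X0) (ω : Fin m → X0) (h : ℕ → S) :
    ∀ t : ℕ, (M.iTraj m κ ν x0 ω h t).1 ∈ Set.Icc (0:ℝ) M.B
  | 0 => κ.act_mem _ _ _ _
  | t+1 => κ.act_mem _ _ _ _

lemma iTraj_snd_eq (M : ElecModel S X0) (m : ℕ) (κ : HistStrategy M) (ν : OblStrategy M)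
    (x0 : X0) (ω : Fin m → X0) (h : ℕ → S) :
    ∀ t : ℕ, (M.iTraj m κ ν x0 ω h t).2
      = M.zTraj x0 h (fun τ => (M.iTraj m κ ν x0 ω h τ).1) t
  | 0 => rfl
  | t+1 => by
      show M.r x0 (M.iTraj m κ ν x0 ω h t).2 (M.iTraj m κ ν x0 ω h t).1 (h (t+1))
        = M.r x0 (M.zTraj x0 h (fun τ => (M.iTraj m κ ν x0 ω h τ).1) t) _ (h (t+1))
      rw [M.iTraj_snd_eq m κ ν x0 ω h t]

/-- The deviating consumer's action process, as a dynamic oblivious strategy. -/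
def devStrat (M : ElecModel S X0) (m : ℕ) (κ : HistStrategy M) (ν : OblStrategy M)
    (x0 : X0) (ω : Fin m → X0) : OblStrategy M where
  act t x h := if x = x0 then (M.iTraj m κ ν x0 ω h t).1 else ν.act t x h
  act_mem t x h := by
    split
    · exact M.iTraj_fst_mem m κ ν x0 ω h t
    · exact ν.act_mem t x h
  act_prefix t x h h' hp := by
    split
    · rw [M.iTraj_congr m κ ν x0 ω t hp]
    · exact ν.act_prefix t x h h' hp

lemma mul_le_abs_mul {x a b : ℝ} (h0 : 0 ≤ a) (hb : a ≤ b) : x * a ≤ |x| * b :=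
  le_trans (mul_le_mul_of_nonneg_right (le_abs_self x) h0)
    (mul_le_mul_of_nonneg_left hb (abs_nonneg x))

lemma deriv_diff_bound {f f' : ℝ → ℝ}
    (hf : ∀ x ∈ Set.Ici (0:ℝ), HasDerivWithinAt f (f' x) (Set.Ici 0) x)
    {c η d ε : ℝ} (hc : 0 ≤ c) (hη : 0 ≤ η)
    (hbd : ∀ x ∈ Set.Icc c (c+η), |f' x - d| ≤ ε) :
    |f (c+η) - f c - d * η| ≤ ε * η := by
  have hsub : Set.Icc c (c+η) ⊆ Set.Ici (0:ℝ) := fun x hx => le_trans hc hx.1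
  have hder : ∀ x ∈ Set.Icc c (c+η),
      HasDerivWithinAt (fun y => f y - d * y) (f' x - d) (Set.Icc c (c+η)) x := by
    intro x hx
    have h2 : HasDerivWithinAt (fun y => d * y) d (Set.Icc c (c+η)) x := by
      simpa using ((hasDerivAt_id x).const_mul d).hasDerivWithinAt
    exact ((hf x (hsub hx)).mono hsub).sub h2
  have key := Convex.norm_image_sub_le_of_norm_hasDerivWithin_le hder
    (fun x hx => by rw [Real.norm_eq_abs]; exact hbd x hx) (convex_Icc _ _)
    (Set.left_mem_Icc.2 (by linarith)) (Set.right_mem_Icc.2 (by linarith))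
  rw [Real.norm_eq_abs, Real.norm_eq_abs] at key
  calc |f (c+η) - f c - d * η|
      = |(f (c+η) - d * (c+η)) - (f c - d * c)| := by congr 1; ring
    _ ≤ ε * |c + η - c| := key
    _ = ε * η := by rw [show c + η - c = η by ring, abs_of_nonneg hη]



lemma avgDemand_mem (M : ElecModel S X0) (ν : OblStrategy M) (s0 : S) (h : ℕ → S) (t : ℕ) :
    M.avgDemand ν s0 h t ∈ Set.Icc (0:ℝ) M.B := by
  constructor
  · exact Finset.sum_nonneg fun x _ =>
      mul_nonneg (M.eta_nonneg s0 x) (ν.act_mem t x h).1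
  · calc ∑ x : X0, M.eta s0 x * ν.act t x h
        ≤ ∑ x : X0, M.eta s0 x * M.B := Finset.sum_le_sum fun x _ =>
          mul_le_mul_of_nonneg_left (ν.act_mem t x h).2 (M.eta_nonneg s0 x)
      _ = M.B := by rw [← Finset.sum_mul, M.eta_sum s0, one_mul]

/-- Per-capita aggregate demand in the `(m+1)`-consumer game. -/
def Ahat (M : ElecModel S X0) (m : ℕ) (κ : HistStrategy M) (ν : OblStrategy M)
    (x0 : X0) (ω : Fin m → X0) (h : ℕ → S) (t : ℕ) : ℝ :=
  M.aggDemandN m κ ν x0 ω h t / ((m : ℝ) + 1)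

lemma Ahat_mem (M : ElecModel S X0) (m : ℕ) (κ : HistStrategy M) (ν : OblStrategy M)
    (x0 : X0) (ω : Fin m → X0) (h : ℕ → S) (t : ℕ) :
    M.Ahat m κ ν x0 ω h t ∈ Set.Icc (0:ℝ) M.B := by
  have hm : (0:ℝ) < (m:ℝ) + 1 := by positivity
  have h1 := M.iTraj_fst_mem m κ ν x0 ω h t
  have hsum1 : (0:ℝ) ≤ ∑ j : Fin m, ν.act t (ω j) h :=
    Finset.sum_nonneg fun j _ => (ν.act_mem t (ω j) h).1
  have hsum2 : ∑ j : Fin m, ν.act t (ω j) h ≤ (m:ℝ) * M.B := by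
    calc ∑ j : Fin m, ν.act t (ω j) h ≤ ∑ _j : Fin m, M.B :=
          Finset.sum_le_sum fun j _ => (ν.act_mem t (ω j) h).2
      _ = (m:ℝ) * M.B := by simp [Finset.sum_const, mul_comm]
  constructor
  · unfold Ahat aggDemandN; exact div_nonneg (by linarith [h1.1]) hm.le
  · unfold Ahat aggDemandN
    rw [div_le_iff₀ hm]
    nlinarith [h1.2, M.B_pos.le]

lemma P_nonneg (M : ElecModel S X0) {P Q : ℝ} (hreg : M.RegularAssumptions P Q) (s : S) :
    0 ≤ P :=
  le_trans (abs_nonneg _) (hreg.bound_C s 0 (Set.mem_Ici.2 le_rfl))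

/-- Stage-`t` total price gap between the continuum prices induced by `ν` and the
`(m+1)`-consumer prices. -/
def gapP (M : ElecModel S X0) (m : ℕ) (κ : HistStrategy M) (ν : OblStrategy M)
    (x0 : X0) (s0 : S) (ω : Fin m → X0) (h : ℕ → S) (t : ℕ) : ℝ :=
  |M.pTil ν s0 h t - M.pN m κ ν x0 ω h t|
    + |M.wTil ν s0 h t - M.wN m κ ν x0 ω h t|
    + |M.qTil ν s0 h t - M.qN m κ ν x0 ω h t|

section Modulus

variable (M : ElecModel S X0) {P Q : ℝ}

lemma mod_H1_snd (hreg : M.RegularAssumptions P Q) (s₀ : S) :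
    ∀ ε > (0:ℝ), ∃ δ > (0:ℝ), ∀ (s s' : S), ∀ A ∈ Set.Icc (0:ℝ) M.B,
      ∀ u ∈ Set.Icc (0:ℝ) M.B, ∀ v ∈ Set.Icc (0:ℝ) M.B,
      |u - v| ≤ δ → |M.dH1 A u s s' - M.dH1 A v s s'| ≤ ε := by
  intro ε hε
  have hP : 0 ≤ P := M.P_nonneg hreg s₀
  obtain ⟨δ₁, hδ₁, h1⟩ := hreg.equicont_H1 (ε/4) (by positivity)
  set η := min δ₁ M.B with hη_def
  have hη : 0 < η := lt_min hδ₁ M.B_pos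
  refine ⟨ε * η / (4*P + 4), by positivity, ?_⟩
  intro s s' A hA u hu v hv huv
  set c := min A (M.B - η) with hc_def
  have hηB : η ≤ M.B := min_le_right _ _
  have hc0 : 0 ≤ c := le_min hA.1 (by linarith)
  have hcA1 : c ≤ A := min_le_left _ _
  have hcA2 : A ≤ c + η := by
    rcases min_cases A (M.B - η) with ⟨hc', _⟩ | ⟨hc', h2⟩ <;> rw [hc_def, hc'] <;>
      linarith [hA.2]
  have hcB : c + η ≤ M.B := by
    have : c ≤ M.B - η := min_le_right _ _
    linarith
  have key : ∀ w ∈ Set.Icc (0:ℝ) M.B,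
      |M.Hc (c+η) w s s' - M.Hc c w s s' - M.dH1 A w s s' * η| ≤ (ε/4) * η := by
    intro w hw
    refine deriv_diff_bound (f := fun y => M.Hc y w s s') (f' := fun y => M.dH1 y w s s')
      (fun x hx => hreg.deriv_H1 s s' w x hx) hc0 hη.le ?_
    intro x hx
    refine h1 s s' w hw x (le_trans hc0 hx.1) A hA.1 ?_
    have : |x - A| ≤ η := abs_sub_le_iff.2 ⟨by linarith [hx.2], by linarith [hx.1]⟩
    exact this.trans (min_le_left _ _)
  have key2 : ∀ ξ, 0 ≤ ξ → ξ ≤ M.B → |M.Hc ξ u s s' - M.Hc ξ v s s'| ≤ P * |u - v| := by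
    intro ξ hξ0 hξB
    have hsub : Set.Icc (min u v) (max u v) ⊆ Set.Ici (0:ℝ) :=
      fun y hy => le_trans (le_min hu.1 hv.1) hy.1
    have hder : ∀ y ∈ Set.Icc (min u v) (max u v),
        HasDerivWithinAt (fun z => M.Hc ξ z s s') (M.dH2 ξ y s s')
          (Set.Icc (min u v) (max u v)) y :=
      fun y hy => (hreg.deriv_H2 s s' ξ y (hsub hy)).mono hsub
    have := Convex.norm_image_sub_le_of_norm_hasDerivWithin_le hder
      (fun y hy => by
        rw [Real.norm_eq_abs]
        exact hreg.bound_H2 s s' ξ ⟨hξ0, hξB⟩ y (hsub hy)) (convex_Icc _ _)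
      (Set.mem_Icc.2 ⟨min_le_right u v, le_max_right u v⟩)
      (Set.mem_Icc.2 ⟨min_le_left u v, le_max_left u v⟩)
    rw [Real.norm_eq_abs, Real.norm_eq_abs] at this
    exact this
  have k1 := key u hu
  have k2 := key v hv
  have k3 := key2 c hc0 (by linarith)
  have k4 := key2 (c+η) (by linarith) hcB
  have main : |M.dH1 A u s s' - M.dH1 A v s s'| * η ≤ (ε/2) * η + 2 * (P * |u - v|) := by
    have expand : (M.dH1 A u s s' - M.dH1 A v s s') * η =
        -(M.Hc (c+η) u s s' - M.Hc c u s s' - M.dH1 A u s s' * η)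
        + (M.Hc (c+η) v s s' - M.Hc c v s s' - M.dH1 A v s s' * η)
        + ((M.Hc (c+η) u s s' - M.Hc (c+η) v s s') - (M.Hc c u s s' - M.Hc c v s s')) := by
      ring
    calc |M.dH1 A u s s' - M.dH1 A v s s'| * η
        = |(M.dH1 A u s s' - M.dH1 A v s s') * η| := by
          rw [abs_mul, abs_of_nonneg hη.le]
      _ ≤ |M.Hc (c+η) u s s' - M.Hc c u s s' - M.dH1 A u s s' * η|
          + |M.Hc (c+η) v s s' - M.Hc c v s s' - M.dH1 A v s s' * η|
          + (|M.Hc (c+η) u s s' - M.Hc (c+η) v s s'| + |M.Hc c u s s' - M.Hc c v s s'|) := by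
          rw [expand]
          refine (abs_add_le _ _).trans (add_le_add ((abs_add_le _ _).trans
            (add_le_add (le_of_eq (abs_neg _)) le_rfl)) (abs_sub _ _))
      _ ≤ (ε/4) * η + (ε/4) * η + (P * |u - v| + P * |u - v|) := by
          exact add_le_add (add_le_add k1 k2) (add_le_add k4 k3)
      _ = (ε/2) * η + 2 * (P * |u - v|) := by ring
  have huv' : P * |u - v| ≤ P * (ε * η / (4*P + 4)) :=
    mul_le_mul_of_nonneg_left huv hP
  have hfin : |M.dH1 A u s s' - M.dH1 A v s s'| * η ≤ ε * η := by
    have h4 : (0:ℝ) < 4*P + 4 := by linarith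
    have hεη : (0:ℝ) ≤ ε * η := by positivity
    have : 2 * (P * (ε * η / (4*P + 4))) ≤ (ε/2) * η := by
      have e1 : 2 * (P * (ε * η / (4*P + 4))) = (2*P) * (ε*η) / (4*P+4) := by ring
      rw [e1, div_le_iff₀ h4]
      nlinarith [hεη]
    linarith [main, huv']
  exact le_of_mul_le_mul_right hfin hη

lemma mod_H2_fst (hreg : M.RegularAssumptions P Q) (s₀ : S) :
    ∀ ε > (0:ℝ), ∃ δ > (0:ℝ), ∀ (s s' : S), ∀ A ∈ Set.Icc (0:ℝ) M.B,
      ∀ u ∈ Set.Icc (0:ℝ) M.B, ∀ v ∈ Set.Icc (0:ℝ) M.B,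
      |u - v| ≤ δ → |M.dH2 u A s s' - M.dH2 v A s s'| ≤ ε := by
  intro ε hε
  have hP : 0 ≤ P := M.P_nonneg hreg s₀
  obtain ⟨δ₁, hδ₁, h1⟩ := hreg.equicont_H2 (ε/4) (by positivity)
  set η := min δ₁ M.B with hη_def
  have hη : 0 < η := lt_min hδ₁ M.B_pos
  refine ⟨ε * η / (4*P + 4), by positivity, ?_⟩
  intro s s' A hA u hu v hv huv
  set c := min A (M.B - η) with hc_def
  have hηB : η ≤ M.B := min_le_right _ _
  have hc0 : 0 ≤ c := le_min hA.1 (by linarith)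
  have hcA1 : c ≤ A := min_le_left _ _
  have hcA2 : A ≤ c + η := by
    rcases min_cases A (M.B - η) with ⟨hc', _⟩ | ⟨hc', h2⟩ <;> rw [hc_def, hc'] <;>
      linarith [hA.2]
  have hcB : c + η ≤ M.B := by
    have : c ≤ M.B - η := min_le_right _ _
    linarith
  have key : ∀ w ∈ Set.Icc (0:ℝ) M.B,
      |M.Hc w (c+η) s s' - M.Hc w c s s' - M.dH2 w A s s' * η| ≤ (ε/4) * η := by
    intro w hw
    refine deriv_diff_bound (f := fun y => M.Hc w y s s') (f' := fun y => M.dH2 w y s s')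
      (fun x hx => hreg.deriv_H2 s s' w x hx) hc0 hη.le ?_
    intro x hx
    refine h1 s s' w hw x (le_trans hc0 hx.1) A hA.1 ?_
    have : |x - A| ≤ η := abs_sub_le_iff.2 ⟨by linarith [hx.2], by linarith [hx.1]⟩
    exact this.trans (min_le_left _ _)
  have key2 : ∀ ξ, 0 ≤ ξ → ξ ≤ M.B → |M.Hc u ξ s s' - M.Hc v ξ s s'| ≤ P * |u - v| := by
    intro ξ hξ0 hξB
    have hsub : Set.Icc (min u v) (max u v) ⊆ Set.Ici (0:ℝ) :=
      fun y hy => le_trans (le_min hu.1 hv.1) hy.1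
    have hder : ∀ y ∈ Set.Icc (min u v) (max u v),
        HasDerivWithinAt (fun z => M.Hc z ξ s s') (M.dH1 y ξ s s')
          (Set.Icc (min u v) (max u v)) y :=
      fun y hy => (hreg.deriv_H1 s s' ξ y (hsub hy)).mono hsub
    have := Convex.norm_image_sub_le_of_norm_hasDerivWithin_le hder
      (fun y hy => by
        rw [Real.norm_eq_abs]
        exact hreg.bound_H1 s s' ξ ⟨hξ0, hξB⟩ y (hsub hy)) (convex_Icc _ _)
      (Set.mem_Icc.2 ⟨min_le_right u v, le_max_right u v⟩)
      (Set.mem_Icc.2 ⟨min_le_left u v, le_max_left u v⟩)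
    rw [Real.norm_eq_abs, Real.norm_eq_abs] at this
    exact this
  have k1 := key u hu
  have k2 := key v hv
  have k3 := key2 c hc0 (by linarith)
  have k4 := key2 (c+η) (by linarith) hcB
  have main : |M.dH2 u A s s' - M.dH2 v A s s'| * η ≤ (ε/2) * η + 2 * (P * |u - v|) := by
    have expand : (M.dH2 u A s s' - M.dH2 v A s s') * η =
        -(M.Hc u (c+η) s s' - M.Hc u c s s' - M.dH2 u A s s' * η)
        + (M.Hc v (c+η) s s' - M.Hc v c s s' - M.dH2 v A s s' * η)
        + ((M.Hc u (c+η) s s' - M.Hc v (c+η) s s') - (M.Hc u c s s' - M.Hc v c s s')) := by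
      ring
    calc |M.dH2 u A s s' - M.dH2 v A s s'| * η
        = |(M.dH2 u A s s' - M.dH2 v A s s') * η| := by
          rw [abs_mul, abs_of_nonneg hη.le]
      _ ≤ |M.Hc u (c+η) s s' - M.Hc u c s s' - M.dH2 u A s s' * η|
          + |M.Hc v (c+η) s s' - M.Hc v c s s' - M.dH2 v A s s' * η|
          + (|M.Hc u (c+η) s s' - M.Hc v (c+η) s s'| + |M.Hc u c s s' - M.Hc v c s s'|) := by
          rw [expand]
          refine (abs_add_le _ _).trans (add_le_add ((abs_add_le _ _).trans
            (add_le_add (le_of_eq (abs_neg _)) le_rfl)) (abs_sub _ _))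
      _ ≤ (ε/4) * η + (ε/4) * η + (P * |u - v| + P * |u - v|) := by
          exact add_le_add (add_le_add k1 k2) (add_le_add k4 k3)
      _ = (ε/2) * η + 2 * (P * |u - v|) := by ring
  have huv' : P * |u - v| ≤ P * (ε * η / (4*P + 4)) :=
    mul_le_mul_of_nonneg_left huv hP
  have hfin : |M.dH2 u A s s' - M.dH2 v A s s'| * η ≤ ε * η := by
    have h4 : (0:ℝ) < 4*P + 4 := by linarith
    have hεη : (0:ℝ) ≤ ε * η := by positivity
    have : 2 * (P * (ε * η / (4*P + 4))) ≤ (ε/2) * η := by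
      have e1 : 2 * (P * (ε * η / (4*P + 4))) = (2*P) * (ε*η) / (4*P+4) := by ring
      rw [e1, div_le_iff₀ h4]
      nlinarith [hεη]
    linarith [main, huv']
  exact le_of_mul_le_mul_right hfin hη

lemma master_mod (hreg : M.RegularAssumptions P Q) (s₀ : S) :
    ∀ ε > (0:ℝ), ∃ δ > (0:ℝ), ∀ (s s' : S),
      ∀ u ∈ Set.Icc (0:ℝ) M.B, ∀ v ∈ Set.Icc (0:ℝ) M.B,
      ∀ u' ∈ Set.Icc (0:ℝ) M.B, ∀ v' ∈ Set.Icc (0:ℝ) M.B,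
      |u - v| ≤ δ → |u' - v'| ≤ δ →
      |M.dC u s - M.dC v s| ≤ ε ∧ |M.dH0 u s - M.dH0 v s| ≤ ε ∧
      |M.dH1 u u' s s' - M.dH1 v v' s s'| ≤ ε ∧
      |M.dH2 u u' s s' - M.dH2 v v' s s'| ≤ ε := by
  intro ε hε
  obtain ⟨δ₁, hδ₁, h1⟩ := hreg.equicont_C ε hε
  obtain ⟨δ₂, hδ₂, h2⟩ := hreg.equicont_H0 ε hε
  obtain ⟨δ₃, hδ₃, h3⟩ := hreg.equicont_H1 (ε/2) (by positivity)
  obtain ⟨δ₄, hδ₄, h4⟩ := M.mod_H1_snd hreg s₀ (ε/2) (by positivity)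
  obtain ⟨δ₅, hδ₅, h5⟩ := hreg.equicont_H2 (ε/2) (by positivity)
  obtain ⟨δ₆, hδ₆, h6⟩ := M.mod_H2_fst hreg s₀ (ε/2) (by positivity)
  refine ⟨min (min δ₁ δ₂) (min (min δ₃ δ₄) (min δ₅ δ₆)), by positivity, ?_⟩
  intro s s' u hu v hv u' hu' v' hv' hd hd'
  have hduv₁ : |u - v| ≤ δ₁ := hd.trans (le_trans (min_le_left _ _) (min_le_left _ _))
  have hduv₂ : |u - v| ≤ δ₂ := hd.trans (le_trans (min_le_left _ _) (min_le_right _ _))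
  have hduv₃ : |u - v| ≤ δ₃ := hd.trans (le_trans (min_le_right _ _)
    (le_trans (min_le_left _ _) (min_le_left _ _)))
  have hduv₆ : |u - v| ≤ δ₆ := hd.trans (le_trans (min_le_right _ _)
    (le_trans (min_le_right _ _) (min_le_right _ _)))
  have hduv'₄ : |u' - v'| ≤ δ₄ := hd'.trans (le_trans (min_le_right _ _)
    (le_trans (min_le_left _ _) (min_le_right _ _)))
  have hduv'₅ : |u' - v'| ≤ δ₅ := hd'.trans (le_trans (min_le_right _ _)
    (le_trans (min_le_right _ _) (min_le_left _ _)))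
  refine ⟨h1 s u hu.1 v hv.1 hduv₁, h2 s u hu.1 v hv.1 hduv₂, ?_, ?_⟩
  · calc |M.dH1 u u' s s' - M.dH1 v v' s s'|
        ≤ |M.dH1 u u' s s' - M.dH1 v u' s s'| + |M.dH1 v u' s s' - M.dH1 v v' s s'| :=
          abs_sub_le _ _ _
      _ ≤ ε/2 + ε/2 := add_le_add
          (h3 s s' u' hu' u hu.1 v hv.1 hduv₃)
          (h4 s s' v hv u' hu' v' hv' hduv'₄)
      _ = ε := by ring
  · calc |M.dH2 u u' s s' - M.dH2 v v' s s'|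
        ≤ |M.dH2 u u' s s' - M.dH2 u v' s s'| + |M.dH2 u v' s s' - M.dH2 v v' s s'| :=
          abs_sub_le _ _ _
      _ ≤ ε/2 + ε/2 := add_le_add
          (h5 s s' u hu u' hu'.1 v' hv'.1 hduv'₅)
          (h6 s s' v' hv' u hu v hv hduv₆)
      _ = ε := by ring
  
end Modulus


lemma abs_sub_le' (a b : ℝ) : |a - b| ≤ |a| + |b| := by
  rw [sub_eq_add_neg]
  exact (abs_add_le _ _).trans (by rw [abs_neg])

section GapBounds

variable (M : ElecModel S X0) {P Q : ℝ}
variable (m : ℕ) (κ : HistStrategy M) (ν : OblStrategy M) (x0 : X0) (s0 : S)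
  (ω : Fin m → X0) (h : ℕ → S)

lemma gapP_le_six (hreg : M.RegularAssumptions P Q) (t : ℕ) :
    M.gapP m κ ν x0 s0 ω h t ≤ 6 * P := by
  have hμ : ∀ τ, M.avgDemand ν s0 h τ ∈ Set.Icc (0:ℝ) M.B := M.avgDemand_mem ν s0 h
  have hA : ∀ τ, M.Ahat m κ ν x0 ω h τ ∈ Set.Icc (0:ℝ) M.B := M.Ahat_mem m κ ν x0 ω h
  have hp1 : |M.pTil ν s0 h t| ≤ P := hreg.bound_C (h t) _ (hμ t).1
  have hp2 : |M.pN m κ ν x0 ω h t| ≤ P := hreg.bound_C (h t) _ (hA t).1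
  have hw1 : |M.wTil ν s0 h t| ≤ P := by
    cases t with
    | zero => exact hreg.bound_H0 (h 0) _ (hμ 0).1
    | succ τ =>
      show |M.dH2 (M.avgDemand ν s0 h τ) (M.avgDemand ν s0 h (τ+1)) (h τ) (h (τ+1))| ≤ P
      exact hreg.bound_H2 (h τ) (h (τ+1)) _ (hμ τ) _ (hμ (τ+1)).1
  have hw2 : |M.wN m κ ν x0 ω h t| ≤ P := by
    cases t with
    | zero => exact hreg.bound_H0 (h 0) _ (hA 0).1
    | succ τ =>
      show |M.dH2 (M.Ahat m κ ν x0 ω h τ) (M.Ahat m κ ν x0 ω h (τ+1)) (h τ) (h (τ+1))| ≤ P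
      exact hreg.bound_H2 (h τ) (h (τ+1)) _ (hA τ) _ (hA (τ+1)).1
  have hq1 : |M.qTil ν s0 h t| ≤ P := by
    cases t with
    | zero =>
      show |(0:ℝ)| ≤ P
      simpa using M.P_nonneg hreg s0
    | succ τ =>
      show |M.dH1 (M.avgDemand ν s0 h τ) (M.avgDemand ν s0 h (τ+1)) (h τ) (h (τ+1))| ≤ P
      exact hreg.bound_H1 (h τ) (h (τ+1)) _ (hμ (τ+1)) _ (hμ τ).1
  have hq2 : |M.qN m κ ν x0 ω h t| ≤ P := by
    cases t with
    | zero =>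
      show |(0:ℝ)| ≤ P
      simpa using M.P_nonneg hreg s0
    | succ τ =>
      show |M.dH1 (M.Ahat m κ ν x0 ω h τ) (M.Ahat m κ ν x0 ω h (τ+1)) (h τ) (h (τ+1))| ≤ P
      exact hreg.bound_H1 (h τ) (h (τ+1)) _ (hA (τ+1)) _ (hA τ).1
  unfold gapP
  have t1 := (abs_sub_le' (M.pTil ν s0 h t) (M.pN m κ ν x0 ω h t))
  have t2 := (abs_sub_le' (M.wTil ν s0 h t) (M.wN m κ ν x0 ω h t))
  have t3 := (abs_sub_le' (M.qTil ν s0 h t) (M.qN m κ ν x0 ω h t))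
  linarith

lemma gapP_le_mod {ε δ : ℝ} (hε : 0 ≤ ε) (hδ : 0 ≤ δ)
    (hmod : ∀ (s s' : S),
      ∀ u ∈ Set.Icc (0:ℝ) M.B, ∀ v ∈ Set.Icc (0:ℝ) M.B,
      ∀ u' ∈ Set.Icc (0:ℝ) M.B, ∀ v' ∈ Set.Icc (0:ℝ) M.B,
      |u - v| ≤ δ → |u' - v'| ≤ δ →
      |M.dC u s - M.dC v s| ≤ ε ∧ |M.dH0 u s - M.dH0 v s| ≤ ε ∧
      |M.dH1 u u' s s' - M.dH1 v v' s s'| ≤ ε ∧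
      |M.dH2 u u' s s' - M.dH2 v v' s s'| ≤ ε)
    (t : ℕ)
    (hd1 : |M.avgDemand ν s0 h (t-1) - M.Ahat m κ ν x0 ω h (t-1)| ≤ δ)
    (hd2 : |M.avgDemand ν s0 h t - M.Ahat m κ ν x0 ω h t| ≤ δ) :
    M.gapP m κ ν x0 s0 ω h t ≤ ε + ε + ε := by
  have hμ : ∀ τ, M.avgDemand ν s0 h τ ∈ Set.Icc (0:ℝ) M.B := M.avgDemand_mem ν s0 h
  have hA : ∀ τ, M.Ahat m κ ν x0 ω h τ ∈ Set.Icc (0:ℝ) M.B := M.Ahat_mem m κ ν x0 ω h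
  have hzero : |M.avgDemand ν s0 h t - M.avgDemand ν s0 h t| ≤ δ := by simpa using hδ
  have hp : |M.pTil ν s0 h t - M.pN m κ ν x0 ω h t| ≤ ε :=
    (hmod (h t) (h t) _ (hμ t) _ (hA t) _ (hμ t) _ (hμ t) hd2 hzero).1
  have hw : |M.wTil ν s0 h t - M.wN m κ ν x0 ω h t| ≤ ε := by
    cases t with
    | zero =>
      exact (hmod (h 0) (h 0) _ (hμ 0) _ (hA 0) _ (hμ 0) _ (hμ 0) hd2 hzero).2.1
    | succ τ =>
      have hd1' : |M.avgDemand ν s0 h τ - M.Ahat m κ ν x0 ω h τ| ≤ δ := by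
        simpa using hd1
      show |M.dH2 (M.avgDemand ν s0 h τ) (M.avgDemand ν s0 h (τ+1)) (h τ) (h (τ+1))
        - M.dH2 (M.Ahat m κ ν x0 ω h τ) (M.Ahat m κ ν x0 ω h (τ+1)) (h τ) (h (τ+1))| ≤ ε
      exact (hmod (h τ) (h (τ+1)) _ (hμ τ) _ (hA τ) _ (hμ (τ+1)) _ (hA (τ+1)) hd1' hd2).2.2.2
  have hq : |M.qTil ν s0 h t - M.qN m κ ν x0 ω h t| ≤ ε := by
    cases t with
    | zero =>
      show |(0:ℝ) - (0:ℝ)| ≤ ε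
      simpa using hε
    | succ τ =>
      have hd1' : |M.avgDemand ν s0 h τ - M.Ahat m κ ν x0 ω h τ| ≤ δ := by
        simpa using hd1
      show |M.dH1 (M.avgDemand ν s0 h τ) (M.avgDemand ν s0 h (τ+1)) (h τ) (h (τ+1))
        - M.dH1 (M.Ahat m κ ν x0 ω h τ) (M.Ahat m κ ν x0 ω h (τ+1)) (h τ) (h (τ+1))| ≤ ε
      exact (hmod (h τ) (h (τ+1)) _ (hμ τ) _ (hA τ) _ (hμ (τ+1)) _ (hA (τ+1)) hd1' hd2).2.2.1
  unfold gapP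
  linarith

lemma gapP_le_main (hreg : M.RegularAssumptions P Q) {ε δ : ℝ} (hε : 0 ≤ ε) (hδ : 0 < δ)
    (hmod : ∀ (s s' : S),
      ∀ u ∈ Set.Icc (0:ℝ) M.B, ∀ v ∈ Set.Icc (0:ℝ) M.B,
      ∀ u' ∈ Set.Icc (0:ℝ) M.B, ∀ v' ∈ Set.Icc (0:ℝ) M.B,
      |u - v| ≤ δ → |u' - v'| ≤ δ →
      |M.dC u s - M.dC v s| ≤ ε ∧ |M.dH0 u s - M.dH0 v s| ≤ ε ∧
      |M.dH1 u u' s s' - M.dH1 v v' s s'| ≤ ε ∧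
      |M.dH2 u u' s s' - M.dH2 v v' s s'| ≤ ε)
    (t : ℕ) :
    M.gapP m κ ν x0 s0 ω h t ≤ 3*ε
      + 6*P*((M.avgDemand ν s0 h (t-1) - M.Ahat m κ ν x0 ω h (t-1))^2
        + (M.avgDemand ν s0 h t - M.Ahat m κ ν x0 ω h t)^2)/δ^2 := by
  have hP : 0 ≤ P := M.P_nonneg hreg s0
  set d1 := M.avgDemand ν s0 h (t-1) - M.Ahat m κ ν x0 ω h (t-1) with hd1_def
  set d2 := M.avgDemand ν s0 h t - M.Ahat m κ ν x0 ω h t with hd2_def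
  by_cases hc : |d1| ≤ δ ∧ |d2| ≤ δ
  · have hb := M.gapP_le_mod m κ ν x0 s0 ω h hε hδ.le hmod t hc.1 hc.2
    have hpos : 0 ≤ 6*P*(d1^2 + d2^2)/δ^2 := by positivity
    linarith
  · have h6 := M.gapP_le_six m κ ν x0 s0 ω h hreg t
    have hge : δ^2 ≤ d1^2 + d2^2 := by
      rcases not_and_or.1 hc with hc' | hc' <;> push_neg at hc'
      · nlinarith [sq_nonneg d2, sq_abs d1, abs_nonneg d1]
      · nlinarith [sq_nonneg d1, sq_abs d2, abs_nonneg d2]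
    have : 6*P ≤ 6*P*(d1^2 + d2^2)/δ^2 := by
      rw [le_div_iff₀ (by positivity)]
      nlinarith
    have hεpos : (0:ℝ) ≤ 3*ε := by linarith
    linarith

end GapBounds

section Probability

variable (M : ElecModel S X0)

lemma prod_double {β : Type*} [CommMonoid β] {m : ℕ} {j k : Fin m} (hjk : j ≠ k)
    (f : Fin m → β) (hf : ∀ i, i ≠ j → i ≠ k → f i = 1) : ∏ i, f i = f j * f k := by
  have hk : k ∈ Finset.univ.erase j := Finset.mem_erase.2 ⟨hjk.symm, Finset.mem_univ k⟩
  rw [← Finset.mul_prod_erase Finset.univ f (Finset.mem_univ j),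
      ← Finset.mul_prod_erase _ f hk,
      Finset.prod_eq_one (fun i hi => hf i
        (Finset.ne_of_mem_erase (Finset.mem_of_mem_erase hi)) (Finset.ne_of_mem_erase hi)),
      mul_one]

lemma sum_eta_prod_eq_one (s0 : S) (m : ℕ) :
    ∑ ω : Fin m → X0, ∏ j, M.eta s0 (ω j) = 1 := by
  rw [← Fintype.prod_sum (fun _ x => M.eta s0 x)]
  simp [M.eta_sum s0]

lemma expect_single (s0 : S) (m : ℕ) (j : Fin m) (F : X0 → ℝ) :
    ∑ ω : Fin m → X0, (∏ i, M.eta s0 (ω i)) * F (ω j)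
      = ∑ x : X0, M.eta s0 x * F x := by
  have key : ∀ ω : Fin m → X0, (∏ i, M.eta s0 (ω i)) * F (ω j)
      = ∏ i, (M.eta s0 (ω i) * (if i = j then F (ω i) else 1)) := by
    intro ω
    rw [Finset.prod_mul_distrib, Finset.prod_ite_eq' Finset.univ j (fun i => F (ω i))]
    simp
  simp_rw [key]
  rw [← Fintype.prod_sum (fun (i : Fin m) (x : X0) => M.eta s0 x * if i = j then F x else 1)]
  have key2 : ∀ i : Fin m, (∑ x : X0, M.eta s0 x * (if i = j then F x else 1))
      = if i = j then ∑ x : X0, M.eta s0 x * F x else 1 := by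
    intro i; by_cases hij : i = j <;> simp [hij, M.eta_sum s0]
  simp_rw [key2]
  rw [Finset.prod_ite_eq' Finset.univ j (fun _ => ∑ x : X0, M.eta s0 x * F x)]
  simp

lemma expect_pair (s0 : S) {m : ℕ} {j k : Fin m} (hjk : j ≠ k) (F G : X0 → ℝ) :
    ∑ ω : Fin m → X0, (∏ i, M.eta s0 (ω i)) * (F (ω j) * G (ω k))
      = (∑ x : X0, M.eta s0 x * F x) * (∑ x : X0, M.eta s0 x * G x) := by
  have key : ∀ ω : Fin m → X0, (∏ i, M.eta s0 (ω i)) * (F (ω j) * G (ω k))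
      = ∏ i, (M.eta s0 (ω i) * (if i = j then F (ω i) else if i = k then G (ω i) else 1)) := by
    intro ω
    rw [Finset.prod_mul_distrib]
    congr 1
    rw [prod_double hjk _ (fun i h1 h2 => by simp [h1, h2])]
    simp [hjk, Ne.symm hjk]
  simp_rw [key]
  rw [← Fintype.prod_sum
    (fun (i : Fin m) (x : X0) => M.eta s0 x * if i = j then F x else if i = k then G x else 1)]
  have key2 : ∀ i : Fin m, (∑ x : X0, M.eta s0 x * (if i = j then F x else if i = k then G x else 1))
      = if i = j then ∑ x : X0, M.eta s0 x * F x
        else if i = k then ∑ x : X0, M.eta s0 x * G x else 1 := by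
    intro i
    by_cases h1 : i = j
    · simp [h1]
    · by_cases h2 : i = k <;> simp [h1, h2, M.eta_sum s0]
  simp_rw [key2]
  rw [prod_double hjk _ (fun i h1 h2 => by simp [h1, h2])]
  simp [hjk, Ne.symm hjk]

lemma second_moment (s0 : S) (m : ℕ) (g : X0 → ℝ) (hg : ∀ x, g x ∈ Set.Icc (0:ℝ) M.B) :
    ∑ ω : Fin m → X0, (∏ i, M.eta s0 (ω i)) *
      (∑ j : Fin m, (g (ω j) - ∑ x : X0, M.eta s0 x * g x))^2 ≤ (m:ℝ) * M.B^2 := by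
  set μ := ∑ x : X0, M.eta s0 x * g x with hμ_def
  have hμmem : μ ∈ Set.Icc (0:ℝ) M.B := by
    constructor
    · exact Finset.sum_nonneg fun x _ => mul_nonneg (M.eta_nonneg s0 x) (hg x).1
    · calc ∑ x : X0, M.eta s0 x * g x ≤ ∑ x : X0, M.eta s0 x * M.B :=
          Finset.sum_le_sum fun x _ => mul_le_mul_of_nonneg_left (hg x).2 (M.eta_nonneg s0 x)
        _ = M.B := by rw [← Finset.sum_mul, M.eta_sum s0, one_mul]
  have hmean : ∑ x : X0, M.eta s0 x * (g x - μ) = 0 := by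
    simp only [mul_sub]
    rw [Finset.sum_sub_distrib, ← Finset.sum_mul, M.eta_sum s0, one_mul]
    simp [hμ_def]
  have hGsq : ∀ x : X0, M.eta s0 x * ((g x - μ) * (g x - μ)) ≤ M.eta s0 x * M.B^2 := by
    intro x
    apply mul_le_mul_of_nonneg_left _ (M.eta_nonneg s0 x)
    nlinarith [(hg x).1, (hg x).2, hμmem.1, hμmem.2]
  calc ∑ ω : Fin m → X0, (∏ i, M.eta s0 (ω i)) * (∑ j : Fin m, (g (ω j) - μ))^2
      = ∑ ω : Fin m → X0, ∑ j : Fin m, ∑ k : Fin m,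
          (∏ i, M.eta s0 (ω i)) * ((g (ω j) - μ) * (g (ω k) - μ)) := by
        apply Finset.sum_congr rfl
        intro ω _
        rw [sq, Finset.sum_mul_sum]
        rw [Finset.mul_sum]
        apply Finset.sum_congr rfl
        intro j _
        rw [Finset.mul_sum]
    _ = ∑ j : Fin m, ∑ k : Fin m, ∑ ω : Fin m → X0,
          (∏ i, M.eta s0 (ω i)) * ((g (ω j) - μ) * (g (ω k) - μ)) := by
        rw [Finset.sum_comm]
        exact Finset.sum_congr rfl fun j _ => Finset.sum_comm
    _ = ∑ j : Fin m, ∑ k : Fin m,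
          (if j = k then ∑ x : X0, M.eta s0 x * ((g x - μ) * (g x - μ)) else 0) := by
        apply Finset.sum_congr rfl
        intro j _
        apply Finset.sum_congr rfl
        intro k _
        by_cases hjk : j = k
        · subst hjk
          rw [if_pos rfl]
          exact M.expect_single s0 m j (fun x => (g x - μ) * (g x - μ))
        · rw [if_neg hjk, M.expect_pair s0 hjk (fun x => g x - μ) (fun x => g x - μ), hmean,
            mul_zero]
    _ = ∑ j : Fin m, ∑ x : X0, M.eta s0 x * ((g x - μ) * (g x - μ)) := by
        apply Finset.sum_congr rfl
        intro j _
        simp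
    _ ≤ ∑ _j : Fin m, M.B^2 := by
        apply Finset.sum_le_sum
        intro j _
        calc ∑ x : X0, M.eta s0 x * ((g x - μ) * (g x - μ))
            ≤ ∑ x : X0, M.eta s0 x * M.B^2 := Finset.sum_le_sum fun x _ => hGsq x
          _ = M.B^2 := by rw [← Finset.sum_mul, M.eta_sum s0, one_mul]
    _ = (m:ℝ) * M.B^2 := by
        simp [Finset.sum_const, Finset.card_univ, nsmul_eq_mul]

end Probability

section Expectation

variable (M : ElecModel S X0)

lemma histProb_nonneg (s0 : S) (h : ℕ → S) : 0 ≤ M.histProb s0 h := by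
  unfold histProb
  apply mul_nonneg
  · split <;> norm_num
  · exact Finset.prod_nonneg fun t _ => M.K_nonneg _ _

lemma K_le_one (s s' : S) : M.K s s' ≤ 1 := by
  rw [← M.K_sum s]
  exact Finset.single_le_sum (fun i _ => M.K_nonneg s i) (Finset.mem_univ s')

lemma histProb_le_one (s0 : S) (h : ℕ → S) : M.histProb s0 h ≤ 1 := by
  unfold histProb
  calc (if h 0 = s0 then (1:ℝ) else 0) * ∏ t ∈ Finset.range M.T, M.K (h t) (h (t + 1))
      ≤ 1 * 1 := by
        apply mul_le_mul
        · split <;> norm_num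
        · exact Finset.prod_le_one (fun t _ => M.K_nonneg _ _) (fun t _ => M.K_le_one _ _)
        · exact Finset.prod_nonneg fun t _ => M.K_nonneg _ _
        · norm_num
    _ = 1 := by norm_num

lemma expectHist_mono (s0 : S) {F G : (ℕ → S) → ℝ} (hFG : ∀ h, F h ≤ G h) :
    M.expectHist s0 F ≤ M.expectHist s0 G :=
  Finset.sum_le_sum fun g _ =>
    mul_le_mul_of_nonneg_left (hFG _) (M.histProb_nonneg s0 _)

lemma expectHist_add (s0 : S) (F G : (ℕ → S) → ℝ) :
    M.expectHist s0 (fun h => F h + G h) = M.expectHist s0 F + M.expectHist s0 G := by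
  unfold expectHist
  rw [← Finset.sum_add_distrib]
  exact Finset.sum_congr rfl fun g _ => by ring

lemma expectHist_le_const (s0 : S) {F : (ℕ → S) → ℝ} {c : ℝ}
    (hF : ∀ h, F h ≤ c) (hc : 0 ≤ c) :
    M.expectHist s0 F ≤ (Fintype.card (Fin (M.T + 1) → S) : ℝ) * c := by
  unfold expectHist
  calc ∑ g : Fin (M.T + 1) → S, M.histProb s0 (M.extendHist g) * F (M.extendHist g)
      ≤ ∑ _g : Fin (M.T + 1) → S, c := by
        apply Finset.sum_le_sum
        intro g _
        calc M.histProb s0 (M.extendHist g) * F (M.extendHist g)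
            ≤ M.histProb s0 (M.extendHist g) * c :=
              mul_le_mul_of_nonneg_left (hF _) (M.histProb_nonneg s0 _)
          _ ≤ 1 * c := mul_le_mul_of_nonneg_right (M.histProb_le_one s0 _) hc
          _ = c := one_mul c
    _ = (Fintype.card (Fin (M.T + 1) → S) : ℝ) * c := by
        rw [Finset.sum_const, Finset.card_univ, nsmul_eq_mul]

lemma expectHist_ge_neg_const (s0 : S) {F : (ℕ → S) → ℝ} {c : ℝ}
    (hF : ∀ h, -c ≤ F h) (hc : 0 ≤ c) :
    -((Fintype.card (Fin (M.T + 1) → S) : ℝ) * c) ≤ M.expectHist s0 F := by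
  have := M.expectHist_le_const s0 (F := fun h => -(F h)) (c := c)
    (fun h => neg_le.mpr (hF h)) hc
  have heq : M.expectHist s0 (fun h => -(F h)) = -(M.expectHist s0 F) := by
    unfold expectHist
    rw [← Finset.sum_neg_distrib]
    exact Finset.sum_congr rfl fun g _ => by ring
  rw [heq] at this
  linarith

end Expectation

section Payoff

variable (M : ElecModel S X0) {P Q : ℝ}
variable (m : ℕ) (κ : HistStrategy M) (ν : OblStrategy M) (x0 : X0) (s0 : S)
  (ω : Fin m → X0) (h : ℕ → S)

lemma absN_le (hreg : M.RegularAssumptions P Q) (t : ℕ) :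
    |M.pN m κ ν x0 ω h t| ≤ P ∧ |M.wN m κ ν x0 ω h t| ≤ P ∧ |M.qN m κ ν x0 ω h t| ≤ P := by
  have hA : ∀ τ, M.Ahat m κ ν x0 ω h τ ∈ Set.Icc (0:ℝ) M.B := M.Ahat_mem m κ ν x0 ω h
  refine ⟨hreg.bound_C (h t) _ (hA t).1, ?_, ?_⟩
  · cases t with
    | zero => exact hreg.bound_H0 (h 0) _ (hA 0).1
    | succ τ =>
      show |M.dH2 (M.Ahat m κ ν x0 ω h τ) (M.Ahat m κ ν x0 ω h (τ+1)) (h τ) (h (τ+1))| ≤ P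
      exact hreg.bound_H2 (h τ) (h (τ+1)) _ (hA τ) _ (hA (τ+1)).1
  · cases t with
    | zero =>
      show |(0:ℝ)| ≤ P
      simpa using M.P_nonneg hreg (h 0)
    | succ τ =>
      show |M.dH1 (M.Ahat m κ ν x0 ω h τ) (M.Ahat m κ ν x0 ω h (τ+1)) (h τ) (h (τ+1))| ≤ P
      exact hreg.bound_H1 (h τ) (h (τ+1)) _ (hA (τ+1)) _ (hA τ).1

lemma iPayoff_le (s0 : S) :
    M.iPayoff m κ ν x0 ω h ≤ M.oblStageSum (M.devStrat m κ ν x0 ω) ν s0 x0 h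
      + ∑ t ∈ Finset.range (M.T + 1), M.B * M.gapP m κ ν x0 s0 ω h t := by
  unfold iPayoff oblStageSum
  rw [← Finset.sum_add_distrib]
  apply Finset.sum_le_sum
  intro t _
  have hact : ∀ τ, (M.devStrat m κ ν x0 ω).act τ x0 h = (M.iTraj m κ ν x0 ω h τ).1 :=
    fun τ => if_pos rfl
  have hfun : (fun τ => (M.devStrat m κ ν x0 ω).act τ x0 h)
      = fun τ => (M.iTraj m κ ν x0 ω h τ).1 := funext hact
  rw [hfun, hact t, hact (t-1), ← M.iTraj_snd_eq m κ ν x0 ω h t]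
  have ha := M.iTraj_fst_mem m κ ν x0 ω h t
  have hpr : (if t = 0 then (0:ℝ) else (M.iTraj m κ ν x0 ω h (t-1)).1) ∈ Set.Icc (0:ℝ) M.B := by
    split
    · exact ⟨le_rfl, M.B_pos.le⟩
    · exact M.iTraj_fst_mem m κ ν x0 ω h (t-1)
  set a := (M.iTraj m κ ν x0 ω h t).1 with ha_def
  set pr := (if t = 0 then (0:ℝ) else (M.iTraj m κ ν x0 ω h (t-1)).1) with hpr_def
  have h1 : (M.pTil ν s0 h t - M.pN m κ ν x0 ω h t) * a
      ≤ |M.pTil ν s0 h t - M.pN m κ ν x0 ω h t| * M.B := mul_le_abs_mul ha.1 ha.2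
  have h2 : (M.wTil ν s0 h t - M.wN m κ ν x0 ω h t) * a
      ≤ |M.wTil ν s0 h t - M.wN m κ ν x0 ω h t| * M.B := mul_le_abs_mul ha.1 ha.2
  have h3 : (M.qTil ν s0 h t - M.qN m κ ν x0 ω h t) * pr
      ≤ |M.qTil ν s0 h t - M.qN m κ ν x0 ω h t| * M.B := mul_le_abs_mul hpr.1 hpr.2
  unfold gapP
  nlinarith [h1, h2, h3]

lemma iPayoff_ge (hreg : M.RegularAssumptions P Q) :
    -(((M.T:ℝ) + 1) * (3 * P * M.B)) ≤ M.iPayoff m κ ν x0 ω h := by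
  have hP : 0 ≤ P := M.P_nonneg hreg (h 0)
  unfold iPayoff
  calc -(((M.T:ℝ) + 1) * (3 * P * M.B))
      = ∑ _t ∈ Finset.range (M.T + 1), -(3 * P * M.B) := by
        rw [Finset.sum_const, Finset.card_range, nsmul_eq_mul]
        push_cast
        ring
    _ ≤ _ := by
        apply Finset.sum_le_sum
        intro t _
        obtain ⟨hp, hw, hq⟩ := M.absN_le m κ ν x0 ω h hreg t
        have ha := M.iTraj_fst_mem m κ ν x0 ω h t
        have hpr : (if t = 0 then (0:ℝ) else (M.iTraj m κ ν x0 ω h (t-1)).1)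
            ∈ Set.Icc (0:ℝ) M.B := by
          split
          · exact ⟨le_rfl, M.B_pos.le⟩
          · exact M.iTraj_fst_mem m κ ν x0 ω h (t-1)
        have hU := (hreg.U_bounds t x0 (M.iTraj m κ ν x0 ω h t).2 (h t)
          (M.iTraj m κ ν x0 ω h t).1).1
        have e1 : (M.pN m κ ν x0 ω h t + M.wN m κ ν x0 ω h t) * (M.iTraj m κ ν x0 ω h t).1
            ≤ |M.pN m κ ν x0 ω h t + M.wN m κ ν x0 ω h t| * M.B := mul_le_abs_mul ha.1 ha.2
        have e2 : M.qN m κ ν x0 ω h t * (if t = 0 then (0:ℝ) else (M.iTraj m κ ν x0 ω h (t-1)).1)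
            ≤ |M.qN m κ ν x0 ω h t| * M.B := mul_le_abs_mul hpr.1 hpr.2
        have e3 : |M.pN m κ ν x0 ω h t + M.wN m κ ν x0 ω h t|
            ≤ |M.pN m κ ν x0 ω h t| + |M.wN m κ ν x0 ω h t| := abs_add_le _ _
        have hB := M.B_pos.le
        nlinarith [e1, e2, e3, hp, hw, hq]

lemma Ed2_le (h : ℕ → S) (t : ℕ) :
    ∑ ω : Fin m → X0, (∏ j, M.eta s0 (ω j)) *
      (M.avgDemand ν s0 h t - M.Ahat m κ ν x0 ω h t)^2 ≤ 2 * M.B^2 / ((m:ℝ) + 1) := by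
  have hm1 : (0:ℝ) < (m:ℝ) + 1 := by positivity
  have hg : ∀ x, ν.act t x h ∈ Set.Icc (0:ℝ) M.B := fun x => ν.act_mem t x h
  have hμm := M.avgDemand_mem ν s0 h t
  have hμ_eq : M.avgDemand ν s0 h t = ∑ x : X0, M.eta s0 x * ν.act t x h := rfl
  have step1 : ∀ ω : Fin m → X0,
      (M.avgDemand ν s0 h t - M.Ahat m κ ν x0 ω h t)^2
        ≤ (2*M.B^2 + 2*(∑ j : Fin m, (ν.act t (ω j) h - M.avgDemand ν s0 h t))^2)
            / ((m:ℝ)+1)^2 := by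
    intro ω
    have ha := M.iTraj_fst_mem m κ ν x0 ω h t
    have hmsum : ∑ j : Fin m, (ν.act t (ω j) h - M.avgDemand ν s0 h t)
        = (∑ j : Fin m, ν.act t (ω j) h) - (m:ℝ) * M.avgDemand ν s0 h t := by
      rw [Finset.sum_sub_distrib]
      simp [Finset.sum_const, Finset.card_univ, nsmul_eq_mul]
    have heq : M.avgDemand ν s0 h t - M.Ahat m κ ν x0 ω h t
        = -((((M.iTraj m κ ν x0 ω h t).1 - M.avgDemand ν s0 h t)
            + ((∑ j : Fin m, ν.act t (ω j) h) - (m:ℝ) * M.avgDemand ν s0 h t))/((m:ℝ)+1)) := by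
      show M.avgDemand ν s0 h t
          - ((M.iTraj m κ ν x0 ω h t).1 + ∑ j : Fin m, ν.act t (ω j) h) / ((m:ℝ)+1) = _
      field_simp
      ring
    rw [heq, hmsum, neg_sq, div_pow]
    apply div_le_div_of_nonneg_right ?_ (by positivity)
    nlinarith [ha.1, ha.2, hμm.1, hμm.2,
      sq_nonneg ((M.iTraj m κ ν x0 ω h t).1 - M.avgDemand ν s0 h t
        - ((∑ j : Fin m, ν.act t (ω j) h) - (m:ℝ) * M.avgDemand ν s0 h t))]
  have hw0 : ∀ ω : Fin m → X0, (0:ℝ) ≤ ∏ j, M.eta s0 (ω j) :=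
    fun ω => Finset.prod_nonneg fun j _ => M.eta_nonneg s0 (ω j)
  have hsm := M.second_moment s0 m (fun x => ν.act t x h) hg
  beta_reduce at hsm
  rw [← hμ_eq] at hsm
  calc ∑ ω : Fin m → X0, (∏ j, M.eta s0 (ω j)) *
        (M.avgDemand ν s0 h t - M.Ahat m κ ν x0 ω h t)^2
      ≤ ∑ ω : Fin m → X0, (∏ j, M.eta s0 (ω j)) *
          ((2*M.B^2 + 2*(∑ j : Fin m, (ν.act t (ω j) h - M.avgDemand ν s0 h t))^2)
            / ((m:ℝ)+1)^2) :=
        Finset.sum_le_sum fun ω _ => mul_le_mul_of_nonneg_left (step1 ω) (hw0 ω)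
    _ = (2*M.B^2 * (∑ ω : Fin m → X0, ∏ j, M.eta s0 (ω j))
          + 2 * (∑ ω : Fin m → X0, (∏ j, M.eta s0 (ω j)) *
              (∑ j : Fin m, (ν.act t (ω j) h - M.avgDemand ν s0 h t))^2)) / ((m:ℝ)+1)^2 := by
        rw [Finset.mul_sum, Finset.mul_sum, ← Finset.sum_add_distrib, Finset.sum_div]
        apply Finset.sum_congr rfl
        intro ω _
        ring
    _ ≤ (2*M.B^2 * 1 + 2 * ((m:ℝ) * M.B^2)) / ((m:ℝ)+1)^2 := by
        apply div_le_div_of_nonneg_right ?_ (by positivity)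
        rw [M.sum_eta_prod_eq_one s0 m]
        have h2 : (0:ℝ) ≤ 2 := by norm_num
        nlinarith [hsm]
    _ = 2 * M.B^2 / ((m:ℝ)+1) := by
        rw [div_eq_div_iff (by positivity) (by positivity)]
        ring
  
end Payoff

lemma sum_mul_sum_swap {α β : Type*} (s : Finset α) (t : Finset β) (w : α → ℝ) (p : β → ℝ)
    (F : α → β → ℝ) :
    ∑ a ∈ s, w a * ∑ b ∈ t, p b * F a b = ∑ b ∈ t, p b * ∑ a ∈ s, w a * F a b := by
  simp_rw [Finset.mul_sum]
  rw [Finset.sum_comm]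
  exact Finset.sum_congr rfl fun b _ => Finset.sum_congr rfl fun a _ => by ring

lemma Vn_ge (M : ElecModel S X0) {P Q : ℝ} (hreg : M.RegularAssumptions P Q)
    (m : ℕ) (κ : HistStrategy M) (ν : OblStrategy M) (x0 : X0) (s0 : S) :
    -((Fintype.card (Fin (M.T + 1) → S) : ℝ) * (((M.T:ℝ) + 1) * (3 * P * M.B)))
      ≤ M.Vn m κ ν x0 s0 := by
  have hP : 0 ≤ P := M.P_nonneg hreg s0
  have hc : 0 ≤ ((M.T:ℝ) + 1) * (3 * P * M.B) :=
    mul_nonneg (by positivity) (mul_nonneg (by linarith) M.B_pos.le)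
  have hE : ∀ ω : Fin m → X0,
      -((Fintype.card (Fin (M.T + 1) → S) : ℝ) * (((M.T:ℝ) + 1) * (3 * P * M.B)))
        ≤ M.expectHist s0 (fun h => M.iPayoff m κ ν x0 ω h) :=
    fun ω => M.expectHist_ge_neg_const s0
      (fun h => M.iPayoff_ge m κ ν x0 ω h hreg) hc
  have hw0 : ∀ ω : Fin m → X0, (0:ℝ) ≤ ∏ j, M.eta s0 (ω j) :=
    fun ω => Finset.prod_nonneg fun j _ => M.eta_nonneg s0 (ω j)
  unfold Vn
  calc -((Fintype.card (Fin (M.T + 1) → S) : ℝ) * (((M.T:ℝ) + 1) * (3 * P * M.B)))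
      = ∑ ω : Fin m → X0, (∏ j, M.eta s0 (ω j)) *
          -((Fintype.card (Fin (M.T + 1) → S) : ℝ) * (((M.T:ℝ) + 1) * (3 * P * M.B))) := by
        rw [← Finset.sum_mul, M.sum_eta_prod_eq_one s0 m, one_mul]
    _ ≤ ∑ ω : Fin m → X0, (∏ j, M.eta s0 (ω j)) *
          M.expectHist s0 (fun h => M.iPayoff m κ ν x0 ω h) :=
        Finset.sum_le_sum fun ω _ => mul_le_mul_of_nonneg_left (hE ω) (hw0 ω)

set_option maxHeartbeats 1000000 in
lemma Vn_sub_obl_le (M : ElecModel S X0) {P Q : ℝ} (hreg : M.RegularAssumptions P Q)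
    (ν : OblStrategy M) (hDOE : M.IsDOE ν) (x0 : X0) (s0 : S) :
    ∀ ε > (0:ℝ), ∃ N : ℕ, ∀ m ≥ N, ∀ κ : HistStrategy M,
      M.Vn m κ ν x0 s0 - M.oblValue ν ν x0 s0 ≤ ε := by
  intro ε hε
  have hP : 0 ≤ P := M.P_nonneg hreg s0
  have hB := M.B_pos
  set R := (Fintype.card (Fin (M.T + 1) → S) : ℝ) with hR_def
  have hR0 : (0:ℝ) ≤ R := Nat.cast_nonneg _
  set Kc := ((M.T:ℝ) + 1) * (M.B * R) with hKc_def
  have hKc0 : 0 ≤ Kc := by positivity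
  set ε' := ε / (6 * Kc + 2) with hε'_def
  have hε'pos : 0 < ε' := by positivity
  obtain ⟨δ, hδ, hmod⟩ := M.master_mod hreg s0 ε' hε'pos
  obtain ⟨N, hN⟩ := exists_nat_ge (Kc * (24 * P * M.B ^ 2 / δ ^ 2) * (2 / ε))
  refine ⟨N, fun m hm κ => ?_⟩
  have hm1 : (0:ℝ) < (m:ℝ) + 1 := by positivity
  set γ := 3 * ε' + 24 * P * M.B ^ 2 / (((m:ℝ) + 1) * δ ^ 2) with hγ_def
  have hterm2 : 0 ≤ 24 * P * M.B ^ 2 / (((m:ℝ) + 1) * δ ^ 2) := by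
    apply div_nonneg _ (by positivity)
    nlinarith [sq_nonneg M.B]
  have hγ0 : 0 ≤ γ := by
    have h3 : 0 ≤ 3 * ε' := by linarith
    rw [hγ_def]; linarith
  have hw0 : ∀ ω : Fin m → X0, (0:ℝ) ≤ ∏ j, M.eta s0 (ω j) :=
    fun ω => Finset.prod_nonneg fun j _ => M.eta_nonneg s0 (ω j)
  have hgap : ∀ (h : ℕ → S) (t : ℕ),
      ∑ ω : Fin m → X0, (∏ j, M.eta s0 (ω j)) * M.gapP m κ ν x0 s0 ω h t ≤ γ := by
    intro h t
    have hd1 := M.Ed2_le m κ ν x0 s0 h (t - 1)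
    have hd2 := M.Ed2_le m κ ν x0 s0 h t
    have h6 : 0 ≤ 6 * P / δ ^ 2 := div_nonneg (by linarith) (by positivity)
    calc ∑ ω : Fin m → X0, (∏ j, M.eta s0 (ω j)) * M.gapP m κ ν x0 s0 ω h t
        ≤ ∑ ω : Fin m → X0, (∏ j, M.eta s0 (ω j)) *
            (3 * ε' + 6 * P * ((M.avgDemand ν s0 h (t-1) - M.Ahat m κ ν x0 ω h (t-1))^2
              + (M.avgDemand ν s0 h t - M.Ahat m κ ν x0 ω h t)^2) / δ^2) :=
          Finset.sum_le_sum fun ω _ => mul_le_mul_of_nonneg_left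
            (M.gapP_le_main m κ ν x0 s0 ω h hreg hε'pos.le hδ hmod t) (hw0 ω)
      _ = 3 * ε' * (∑ ω : Fin m → X0, ∏ j, M.eta s0 (ω j))
          + ((6 * P / δ^2) * (∑ ω : Fin m → X0, (∏ j, M.eta s0 (ω j)) *
              (M.avgDemand ν s0 h (t-1) - M.Ahat m κ ν x0 ω h (t-1))^2)
          + (6 * P / δ^2) * (∑ ω : Fin m → X0, (∏ j, M.eta s0 (ω j)) *
              (M.avgDemand ν s0 h t - M.Ahat m κ ν x0 ω h t)^2)) := by
          rw [Finset.mul_sum, Finset.mul_sum, Finset.mul_sum, ← Finset.sum_add_distrib,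
            ← Finset.sum_add_distrib]
          apply Finset.sum_congr rfl
          intro ω _
          ring
      _ ≤ 3 * ε' * 1 + ((6 * P / δ^2) * (2 * M.B^2 / ((m:ℝ)+1))
          + (6 * P / δ^2) * (2 * M.B^2 / ((m:ℝ)+1))) := by
          rw [M.sum_eta_prod_eq_one s0 m]
          exact add_le_add le_rfl (add_le_add (mul_le_mul_of_nonneg_left hd1 h6)
            (mul_le_mul_of_nonneg_left hd2 h6))
      _ = γ := by
          rw [hγ_def]
          field_simp
          ring
  have hωb : ∀ ω : Fin m → X0,
      M.expectHist s0 (fun h => M.iPayoff m κ ν x0 ω h)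
        ≤ M.oblValue ν ν x0 s0 + M.expectHist s0
            (fun h => ∑ t ∈ Finset.range (M.T + 1), M.B * M.gapP m κ ν x0 s0 ω h t) := by
    intro ω
    have h1 : M.expectHist s0 (fun h => M.iPayoff m κ ν x0 ω h)
        ≤ M.expectHist s0 (fun h => M.oblStageSum (M.devStrat m κ ν x0 ω) ν s0 x0 h
            + ∑ t ∈ Finset.range (M.T + 1), M.B * M.gapP m κ ν x0 s0 ω h t) :=
      M.expectHist_mono s0 (fun h => M.iPayoff_le m κ ν x0 ω h s0)
    rw [M.expectHist_add s0 (fun h => M.oblStageSum (M.devStrat m κ ν x0 ω) ν s0 x0 h)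
      (fun h => ∑ t ∈ Finset.range (M.T + 1), M.B * M.gapP m κ ν x0 s0 ω h t)] at h1
    exact h1.trans (add_le_add (hDOE (M.devStrat m κ ν x0 ω) x0 s0) le_rfl)
  have hVn : M.Vn m κ ν x0 s0 ≤ M.oblValue ν ν x0 s0
      + ∑ ω : Fin m → X0, (∏ j, M.eta s0 (ω j)) * M.expectHist s0
          (fun h => ∑ t ∈ Finset.range (M.T + 1), M.B * M.gapP m κ ν x0 s0 ω h t) := by
    unfold Vn
    calc ∑ ω : Fin m → X0, (∏ j, M.eta s0 (ω j)) *
          M.expectHist s0 (fun h => M.iPayoff m κ ν x0 ω h)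
        ≤ ∑ ω : Fin m → X0, (∏ j, M.eta s0 (ω j)) * (M.oblValue ν ν x0 s0
            + M.expectHist s0 (fun h => ∑ t ∈ Finset.range (M.T + 1),
                M.B * M.gapP m κ ν x0 s0 ω h t)) :=
          Finset.sum_le_sum fun ω _ => mul_le_mul_of_nonneg_left (hωb ω) (hw0 ω)
      _ = M.oblValue ν ν x0 s0 * (∑ ω : Fin m → X0, ∏ j, M.eta s0 (ω j))
          + ∑ ω : Fin m → X0, (∏ j, M.eta s0 (ω j)) * M.expectHist s0
              (fun h => ∑ t ∈ Finset.range (M.T + 1), M.B * M.gapP m κ ν x0 s0 ω h t) := by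
          rw [Finset.mul_sum, ← Finset.sum_add_distrib]
          apply Finset.sum_congr rfl
          intro ω _
          ring
      _ = _ := by rw [M.sum_eta_prod_eq_one s0 m, mul_one]
  have hdouble : ∑ ω : Fin m → X0, (∏ j, M.eta s0 (ω j)) * M.expectHist s0
      (fun h => ∑ t ∈ Finset.range (M.T + 1), M.B * M.gapP m κ ν x0 s0 ω h t)
      ≤ Kc * γ := by
    have hTB : 0 ≤ ((M.T:ℝ) + 1) * (M.B * γ) :=
      mul_nonneg (by positivity) (mul_nonneg hB.le hγ0)
    unfold expectHist
    rw [sum_mul_sum_swap Finset.univ Finset.univ _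
      (fun g => M.histProb s0 (M.extendHist g))
      (fun ω g => ∑ t ∈ Finset.range (M.T + 1), M.B * M.gapP m κ ν x0 s0 ω (M.extendHist g) t)]
    have hinner : ∀ g : Fin (M.T + 1) → S,
        ∑ ω : Fin m → X0, (∏ j, M.eta s0 (ω j)) *
          (∑ t ∈ Finset.range (M.T + 1), M.B * M.gapP m κ ν x0 s0 ω (M.extendHist g) t)
        ≤ ((M.T:ℝ) + 1) * (M.B * γ) := by
      intro g
      rw [sum_mul_sum_swap Finset.univ (Finset.range (M.T + 1)) _ (fun _ => M.B)
        (fun ω t => M.gapP m κ ν x0 s0 ω (M.extendHist g) t)]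
      calc ∑ t ∈ Finset.range (M.T + 1), M.B *
            (∑ ω : Fin m → X0, (∏ j, M.eta s0 (ω j)) * M.gapP m κ ν x0 s0 ω (M.extendHist g) t)
          ≤ ∑ _t ∈ Finset.range (M.T + 1), M.B * γ :=
            Finset.sum_le_sum fun t _ => mul_le_mul_of_nonneg_left (hgap _ t) hB.le
        _ = ((M.T:ℝ) + 1) * (M.B * γ) := by
            rw [Finset.sum_const, Finset.card_range, nsmul_eq_mul]
            push_cast
            ring
    calc ∑ g : Fin (M.T + 1) → S, M.histProb s0 (M.extendHist g) *
          (∑ ω : Fin m → X0, (∏ j, M.eta s0 (ω j)) *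
            (∑ t ∈ Finset.range (M.T + 1), M.B * M.gapP m κ ν x0 s0 ω (M.extendHist g) t))
        ≤ ∑ _g : Fin (M.T + 1) → S, ((M.T:ℝ) + 1) * (M.B * γ) := by
          apply Finset.sum_le_sum
          intro g _
          calc M.histProb s0 (M.extendHist g) *
                (∑ ω : Fin m → X0, (∏ j, M.eta s0 (ω j)) *
                  (∑ t ∈ Finset.range (M.T + 1), M.B * M.gapP m κ ν x0 s0 ω (M.extendHist g) t))
              ≤ M.histProb s0 (M.extendHist g) * (((M.T:ℝ) + 1) * (M.B * γ)) :=
                mul_le_mul_of_nonneg_left (hinner g) (M.histProb_nonneg s0 _)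
            _ ≤ 1 * (((M.T:ℝ) + 1) * (M.B * γ)) :=
                mul_le_mul_of_nonneg_right (M.histProb_le_one s0 _) hTB
            _ = ((M.T:ℝ) + 1) * (M.B * γ) := one_mul _
      _ = R * (((M.T:ℝ) + 1) * (M.B * γ)) := by
          rw [Finset.sum_const, Finset.card_univ, nsmul_eq_mul]
      _ = Kc * γ := by rw [hKc_def]; ring
  have hbound : M.Vn m κ ν x0 s0 - M.oblValue ν ν x0 s0 ≤ Kc * γ := by
    linarith [hVn, hdouble]
  have hsplit : Kc * γ = 3 * Kc * ε' + Kc * (24 * P * M.B^2 / (((m:ℝ)+1) * δ^2)) := by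
    rw [hγ_def]; ring
  have hhalf1 : 3 * Kc * ε' ≤ ε / 2 := by
    rw [hε'_def]
    have h62 : (0:ℝ) < 6 * Kc + 2 := by linarith
    rw [← mul_div_assoc, div_le_div_iff₀ h62 two_pos]
    nlinarith
  have hhalf2 : Kc * (24 * P * M.B^2 / (((m:ℝ)+1) * δ^2)) ≤ ε / 2 := by
    set C := Kc * (24 * P * M.B ^ 2 / δ ^ 2) with hC_def
    have hεne : ε ≠ 0 := ne_of_gt hε
    have hC0 : 0 ≤ C := by
      apply mul_nonneg hKc0
      apply div_nonneg _ (by positivity)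
      nlinarith [sq_nonneg M.B]
    have hNm : C * (2/ε) ≤ (m:ℝ) + 1 := by
      have h1 : ((N:ℝ)) ≤ (m:ℝ) := Nat.cast_le.2 hm
      calc C * (2/ε) ≤ (N:ℝ) := hN
        _ ≤ (m:ℝ) + 1 := by linarith
    have hC2 : C ≤ ((m:ℝ)+1) * (ε/2) := by
      have hmul := mul_le_mul_of_nonneg_right hNm (le_of_lt (half_pos hε))
      have hCe : C * (2/ε) * (ε/2) = C := by field_simp
      linarith [hmul, hCe.symm.le, hCe.le]
    have heq : Kc * (24 * P * M.B^2 / (((m:ℝ)+1) * δ^2)) = C / ((m:ℝ)+1) := by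
      have e1 : (24 * P * M.B^2 / (((m:ℝ)+1) * δ^2))
          = (24 * P * M.B ^ 2 / δ ^ 2) / ((m:ℝ)+1) := by
        rw [div_div, mul_comm (δ^2) ((m:ℝ)+1)]
      rw [hC_def, e1]
      ring
    rw [heq, div_le_iff₀ hm1]
    linarith [hC2]
  calc M.Vn m κ ν x0 s0 - M.oblValue ν ν x0 s0 ≤ Kc * γ := hbound
    _ = 3 * Kc * ε' + Kc * (24 * P * M.B^2 / (((m:ℝ)+1) * δ^2)) := hsplit
    _ ≤ ε / 2 + ε / 2 := add_le_add hhalf1 hhalf2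
    _ = ε := by ring

end ElecModel

open ElecModel in
/-- Step 3 of the proof of Theorem 1. If all consumers other than `i`
in the `n`-consumer game use a DOE strategy `ν` of the continuum game, then the maximum
expected payoff consumer `i` can obtain is asymptotically no larger than her optimal
oblivious value: for any sequence of history-dependent strategies `κ n`,
`limsup_{n→∞} (Vⁿ(x0, s0 ∣ κ n, ν) - Ṽ(x0, s0 ∣ ν, ν)) ≤ 0`. -/
theorem n_consumer_payoff_asymptotically_below_oblivious_value
    {S : Type*} {X0 : Type*} [Fintype S] [DecidableEq S] [Fintype X0] [DecidableEq X0]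
    (M : ElecModel S X0) (P Q : ℝ)
    (hreg : RegularAssumptions M P Q)
    (ν : OblStrategy M) (hDOE : M.IsDOE ν) :
    ∀ (s0 : S) (x0 : X0) (κ : ℕ → HistStrategy M),
      Filter.limsup
        (fun n : ℕ => M.Vn (n - 1) (κ n) ν x0 s0 - M.oblValue ν ν x0 s0)
        Filter.atTop ≤ 0 := by
  intro s0 x0 κ
  set f : ℕ → ℝ := fun n => M.Vn (n - 1) (κ n) ν x0 s0 - M.oblValue ν ν x0 s0 with hf_def
  have hlb : ∀ n : ℕ,
      -((Fintype.card (Fin (M.T + 1) → S) : ℝ) * (((M.T:ℝ) + 1) * (3 * P * M.B)))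
        - M.oblValue ν ν x0 s0 ≤ f n := by
    intro n
    have hV := M.Vn_ge hreg (n - 1) (κ n) ν x0 s0
    simp only [hf_def]
    linarith
  have hco : Filter.IsCoboundedUnder (· ≤ ·) Filter.atTop f :=
    Filter.isCoboundedUnder_le_of_le Filter.atTop hlb
  have hls : ∀ ε > (0:ℝ), Filter.limsup f Filter.atTop ≤ ε := by
    intro ε hε
    obtain ⟨N, hN⟩ := M.Vn_sub_obl_le hreg ν hDOE x0 s0 ε hε
    apply Filter.limsup_le_of_le hco
    filter_upwards [Filter.eventually_ge_atTop (N + 1)] with n hn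
    have hm : n - 1 ≥ N := by omega
    exact hN (n - 1) hm (κ n)
  by_contra hcon
  push_neg at hcon
  have h2 := hls (Filter.limsup f Filter.atTop / 2) (by linarith)
  linarith
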